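/- arXiv:0708.3623 — 6 statements merged into one kernel-verified Lean document; each statement's English description precedes it below -/
import Mathlib

section
/- The number of relative derangements of type B on [n] equals n!·2^n + Σ_{k=1}^{n-1} (-1)^k · C(n-1, k) · (n-k)! · 2^{n-k}. -/
namespace RelDerB

/-- contract a value past a deleted value `d` -/
def ctr (d v : ℕ) : ℕ := if v < d then v else v - 1
/-- expand: insert a gap at `e` -/
def exv (e v : ℕ) : ℕ := if v < e then v else v + 1
/-- expand a position past `m` (position `m+1` is deleted) -/
def pex (m i : ℕ) : ℕ := if i ≤ m then i else i + 1
def pcn (m j : ℕ) : ℕ := if j ≤ m then j else j - 1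

lemma pex_lt {N m i : ℕ} (hm : m < N) (hi : i < N) : pex m i < N + 1 := by
  unfold pex; split <;> omega
lemma pcn_lt {N m j : ℕ} (hm : m < N) (hj : j < N + 1) : pcn m j < N := by
  unfold pcn; split <;> omega
lemma ctr_lt {N m d v : ℕ} (hm : m < N) (hd : d < N + 1) (hv : v < N + 1) : ctr d v < N := by
  unfold ctr; split <;> omega
lemma exv_lt {N e' v : ℕ} (he : e' < N) (hv : v < N) : exv (e' + 1) v < N + 1 := by
  unfold exv; split <;> omega
lemma ctr_inj {d v w : ℕ} (hv : v ≠ d) (hw : w ≠ d) (h : ctr d v = ctr d w) : v = w := by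
  unfold ctr at h; split_ifs at h <;> omega
lemma pex_inj {m i j : ℕ} (h : pex m i = pex m j) : i = j := by
  unfold pex at h; split_ifs at h <;> omega
lemma pex_ne {m i : ℕ} : pex m i ≠ m + 1 := by unfold pex; split <;> omega
lemma ctr_succ {d v : ℕ} (h1 : v ≠ d) (h2 : v + 1 ≠ d) : ctr d (v + 1) = ctr d v + 1 := by
  unfold ctr; split_ifs <;> omega
lemma exv_ne {e v : ℕ} : exv e v ≠ e := by unfold exv; split <;> omega
lemma exv_inj {e v w : ℕ} (h : exv e v = exv e w) : v = w := by
  unfold exv at h; split_ifs at h <;> omega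
lemma pcn_inj {m i j : ℕ} (hi : i ≠ m + 1) (hj : j ≠ m + 1) (h : pcn m i = pcn m j) : i = j := by
  unfold pcn at h; split_ifs at h <;> omega
lemma exv_succ {e v : ℕ} (h : v + 1 ≠ e) : exv e (v + 1) = exv e v + 1 := by
  unfold exv; split_ifs <;> omega
lemma pex_pcn {m j : ℕ} (hj : j ≠ m + 1) : pex m (pcn m j) = j := by
  unfold pex pcn; split_ifs <;> omega
lemma pcn_pex {m i : ℕ} : pcn m (pex m i) = i := by
  unfold pex pcn; split_ifs <;> omega
lemma exv_ctr {d v : ℕ} (h : v ≠ d) : exv d (ctr d v) = v := by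
  unfold exv ctr; split_ifs <;> omega
lemma ctr_exv {e v : ℕ} : ctr e (exv e v) = v := by
  unfold ctr exv; split_ifs <;> omega
lemma ctr_lt_self {d v : ℕ} (h : v < d) : ctr d v = v := by unfold ctr; split <;> omega
lemma exv_of_lt {e v : ℕ} (h : v < e) : exv e v = v := by unfold exv; split <;> omega
lemma pex_of_le {m i : ℕ} (h : i ≤ m) : pex m i = i := by unfold pex; split <;> omega
lemma pcn_of_le {m j : ℕ} (h : j ≤ m) : pcn m j = j := by unfold pcn; split <;> omega

/-- The succession condition on positions in `T`. -/
def SCond (n : ℕ) (T : Finset ℕ) (f : Fin n → Fin n × Bool) : Prop :=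
  ∀ i ∈ T, ∀ (h1 : i + 1 < n) (h0 : i < n),
    ((f ⟨i + 1, h1⟩).1 : ℕ) = ((f ⟨i, h0⟩).1 : ℕ) + 1 ∧ (f ⟨i + 1, h1⟩).2 = (f ⟨i, h0⟩).2

def AA (n : ℕ) (T : Finset ℕ) : Type :=
  {f : Fin n → Fin n × Bool // Function.Injective (fun i => (f i).1) ∧ SCond n T f}

def phiMap (N m : ℕ) (hm : m < N) (f : Fin (N + 1) → Fin (N + 1) × Bool) (i : Fin N) :
    Fin N × Bool :=
  (⟨ctr ((f ⟨m + 1, by omega⟩).1 : ℕ) ((f ⟨pex m i.1, pex_lt hm i.isLt⟩).1 : ℕ),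
      ctr_lt hm (f ⟨m + 1, by omega⟩).1.isLt (f ⟨pex m i.1, pex_lt hm i.isLt⟩).1.isLt⟩,
    (f ⟨pex m i.1, pex_lt hm i.isLt⟩).2)

def psiMap (N m : ℕ) (hm : m < N) (g : Fin N → Fin N × Bool) (j : Fin (N + 1)) :
    Fin (N + 1) × Bool :=
  if hj : j.1 = m + 1 then
    (⟨((g ⟨m, hm⟩).1 : ℕ) + 1, by have := (g ⟨m, hm⟩).1.isLt; omega⟩, (g ⟨m, hm⟩).2)
  else
    (⟨exv (((g ⟨m, hm⟩).1 : ℕ) + 1) ((g ⟨pcn m j.1, pcn_lt hm j.isLt⟩).1 : ℕ),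
        exv_lt (g ⟨m, hm⟩).1.isLt (g ⟨pcn m j.1, pcn_lt hm j.isLt⟩).1.isLt⟩,
      (g ⟨pcn m j.1, pcn_lt hm j.isLt⟩).2)


variable {N m : ℕ} {T : Finset ℕ}

lemma val_inj {n : ℕ} {f : Fin n → Fin n × Bool}
    (hinj : Function.Injective (fun i => (f i).1)) {a b : Fin n}
    (h : ((f a).1 : ℕ) = ((f b).1 : ℕ)) : a = b :=
  hinj (Fin.ext h)

lemma phi_ne (hm : m < N) {f : Fin (N + 1) → Fin (N + 1) × Bool}
    (hinj : Function.Injective (fun i => (f i).1)) (i : Fin N) :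
    ((f ⟨pex m i.1, pex_lt hm i.isLt⟩).1 : ℕ) ≠ ((f ⟨m + 1, by omega⟩).1 : ℕ) := by
  intro hEq
  have h2 := val_inj hinj hEq
  rw [Fin.mk.injEq] at h2
  exact pex_ne h2

lemma phi_inj (hm : m < N) {f : Fin (N + 1) → Fin (N + 1) × Bool}
    (hinj : Function.Injective (fun i => (f i).1)) :
    Function.Injective (fun i => (phiMap N m hm f i).1) := by
  intro i i' h
  simp only [phiMap] at h
  have hv : ctr ((f ⟨m + 1, by omega⟩).1 : ℕ) ((f ⟨pex m i.1, pex_lt hm i.isLt⟩).1 : ℕ)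
      = ctr ((f ⟨m + 1, by omega⟩).1 : ℕ) ((f ⟨pex m i'.1, pex_lt hm i'.isLt⟩).1 : ℕ) :=
    congrArg Fin.val h
  have := ctr_inj (phi_ne hm hinj i) (phi_ne hm hinj i') hv
  have h3 := val_inj hinj this
  rw [Fin.mk.injEq] at h3
  exact Fin.ext (pex_inj h3)

lemma phi_cond (hm : m < N) {f : Fin (N + 1) → Fin (N + 1) × Bool}
    (hinj : Function.Injective (fun i => (f i).1)) (hc : SCond (N + 1) T f)
    (hmT : m ∈ T) (hmax : ∀ i ∈ T, i ≤ m) :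
    SCond N (T.erase m) (phiMap N m hm f) := by
  intro i hi h1 h0
  obtain ⟨hne, hiT⟩ := Finset.mem_erase.mp hi
  have him : i < m := lt_of_le_of_ne (hmax i hiT) hne
  -- rewrite the relevant points
  have e1 : (⟨pex m ((⟨i + 1, h1⟩ : Fin N)).1, pex_lt hm h1⟩ : Fin (N + 1))
      = ⟨i + 1, by omega⟩ := Fin.ext (pex_of_le (show i + 1 ≤ m by omega))
  have e0 : (⟨pex m ((⟨i, h0⟩ : Fin N)).1, pex_lt hm h0⟩ : Fin (N + 1))
      = ⟨i, by omega⟩ := Fin.ext (pex_of_le (show i ≤ m by omega))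
  have hsucc := hc i hiT (by omega) (by omega)
  -- d = value at m+1 equals value at m plus 1
  have hd := hc m hmT (by omega) (by omega)
  simp only [phiMap, e1, e0]
  constructor
  · show ctr _ _ = ctr _ _ + 1
    rw [hsucc.1]
    refine ctr_succ ?_ ?_
    · intro hEq
      have := val_inj hinj hEq
      rw [Fin.mk.injEq] at this; omega
    · rw [← hsucc.1]
      intro hEq
      have := val_inj hinj hEq
      rw [Fin.mk.injEq] at this; omega
  · exact hsucc.2

lemma psi_inj (hm : m < N) {g : Fin N → Fin N × Bool}
    (ginj : Function.Injective (fun i => (g i).1)) :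
    Function.Injective (fun j => (psiMap N m hm g j).1) := by
  intro j j' h
  simp only at h
  by_cases hj : j.1 = m + 1 <;> by_cases hj' : j'.1 = m + 1
  · exact Fin.ext (hj.trans hj'.symm)
  · rw [psiMap, psiMap, dif_pos hj, dif_neg hj'] at h
    exact absurd (congrArg Fin.val h).symm exv_ne
  · rw [psiMap, psiMap, dif_neg hj, dif_pos hj'] at h
    exact absurd (congrArg Fin.val h) exv_ne
  · rw [psiMap, psiMap, dif_neg hj, dif_neg hj'] at h
    have hv := exv_inj (congrArg Fin.val h)
    have h3 := val_inj ginj hv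
    rw [Fin.mk.injEq] at h3
    exact Fin.ext (pcn_inj hj hj' h3)

lemma psi_cond (hm : m < N) {g : Fin N → Fin N × Bool}
    (ginj : Function.Injective (fun i => (g i).1)) (gc : SCond N (T.erase m) g)
    (hmT : m ∈ T) (hmax : ∀ i ∈ T, i ≤ m) :
    SCond (N + 1) T (psiMap N m hm g) := by
  intro i hiT h1 h0
  rcases eq_or_lt_of_le (hmax i hiT) with him | him
  · -- i = m
    subst him
    have e0 : (⟨pcn i ((⟨i, h0⟩ : Fin (N + 1))).1, pcn_lt hm h0⟩ : Fin N)
        = ⟨i, hm⟩ := Fin.ext (pcn_of_le (le_refl i))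
    rw [psiMap, psiMap, dif_pos (show ((⟨i + 1, h1⟩ : Fin (N+1))).1 = i + 1 from rfl),
      dif_neg (show ¬(i = i + 1) by omega)]
    simp only [e0]
    refine ⟨?_, trivial⟩
    show ((g ⟨i, hm⟩).1 : ℕ) + 1 = exv _ _ + 1
    rw [exv_of_lt (by omega)]
  · -- i < m
    have e1 : (⟨pcn m ((⟨i + 1, h1⟩ : Fin (N + 1))).1, pcn_lt hm h1⟩ : Fin N)
        = ⟨i + 1, by omega⟩ := Fin.ext (pcn_of_le (show i + 1 ≤ m by omega))
    have e0 : (⟨pcn m ((⟨i, h0⟩ : Fin (N + 1))).1, pcn_lt hm h0⟩ : Fin N)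
        = ⟨i, by omega⟩ := Fin.ext (pcn_of_le (show i ≤ m by omega))
    have hsucc := gc i (Finset.mem_erase.mpr ⟨by omega, hiT⟩) (by omega) (by omega)
    rw [psiMap, psiMap,
      dif_neg (show ¬(i + 1 = m + 1) by omega),
      dif_neg (show ¬(i = m + 1) by omega)]
    simp only [e1, e0]
    refine ⟨?_, hsucc.2⟩
    show exv _ _ = exv _ _ + 1
    rw [hsucc.1]
    refine exv_succ ?_
    intro hEq
    have h2 : ((g ⟨i, by omega⟩).1 : ℕ) = ((g ⟨m, hm⟩).1 : ℕ) := by omega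
    have h3 := val_inj ginj h2
    rw [Fin.mk.injEq] at h3
    omega

lemma phi_at_m (hm : m < N) {f : Fin (N + 1) → Fin (N + 1) × Bool}
    (hc : SCond (N + 1) T f) (hmT : m ∈ T) :
    ((phiMap N m hm f ⟨m, hm⟩).1 : ℕ) + 1 = ((f ⟨m + 1, by omega⟩).1 : ℕ) ∧
    (phiMap N m hm f ⟨m, hm⟩).2 = (f ⟨m + 1, by omega⟩).2 := by
  have hd := hc m hmT (by omega) (by omega)
  have em : (⟨pex m ((⟨m, hm⟩ : Fin N)).1, pex_lt hm hm⟩ : Fin (N + 1))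
      = ⟨m, by omega⟩ := Fin.ext (pex_of_le (le_refl m))
  rw [phiMap]
  simp only [em]
  constructor
  · show ctr ((f ⟨m + 1, by omega⟩).1 : ℕ) _ + 1 = _
    rw [hd.1, ctr_lt_self (by omega)]
  · exact hd.2.symm

lemma psi_phi (hm : m < N) {f : Fin (N + 1) → Fin (N + 1) × Bool}
    (hinj : Function.Injective (fun i => (f i).1)) (hc : SCond (N + 1) T f)
    (hmT : m ∈ T) :
    psiMap N m hm (phiMap N m hm f) = f := by
  funext j
  have hAt := phi_at_m (T := T) hm hc hmT
  by_cases hj : j.1 = m + 1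
  · have hjj : j = ⟨m + 1, by omega⟩ := Fin.ext hj
    rw [hjj, psiMap, dif_pos rfl]
    refine Prod.ext (Fin.ext ?_) ?_
    · exact hAt.1
    · exact hAt.2
  · rw [psiMap, dif_neg hj]
    have ep : (⟨pex m ((⟨pcn m j.1, pcn_lt hm j.isLt⟩ : Fin N)).1,
        pex_lt hm (pcn_lt hm j.isLt)⟩ : Fin (N + 1)) = j := Fin.ext (pex_pcn hj)
    have hne : ((f ⟨pex m ((⟨pcn m j.1, pcn_lt hm j.isLt⟩ : Fin N)).1,
        pex_lt hm (pcn_lt hm j.isLt)⟩).1 : ℕ) ≠ ((f ⟨m + 1, by omega⟩).1 : ℕ) :=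
      phi_ne hm hinj _
    rw [ep] at hne
    refine Prod.ext (Fin.ext ?_) ?_
    · show exv (((phiMap N m hm f ⟨m, hm⟩).1 : ℕ) + 1)
        ((phiMap N m hm f ⟨pcn m j.1, pcn_lt hm j.isLt⟩).1 : ℕ) = ((f j).1 : ℕ)
      rw [hAt.1]
      show exv _ (ctr _ ((f ⟨pex m ((⟨pcn m j.1, pcn_lt hm j.isLt⟩ : Fin N)).1,
        pex_lt hm (pcn_lt hm j.isLt)⟩).1 : ℕ)) = _
      rw [ep]
      exact exv_ctr hne
    · show (phiMap N m hm f ⟨pcn m j.1, pcn_lt hm j.isLt⟩).2 = (f j).2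
      rw [phiMap]
      simp only [ep]

lemma phi_psi (hm : m < N) {g : Fin N → Fin N × Bool} :
    phiMap N m hm (psiMap N m hm g) = g := by
  funext i
  have hd : ((psiMap N m hm g ⟨m + 1, by omega⟩).1 : ℕ) = ((g ⟨m, hm⟩).1 : ℕ) + 1 := by
    rw [psiMap, dif_pos rfl]
  have hpe : ¬(((⟨pex m i.1, pex_lt hm i.isLt⟩ : Fin (N + 1))).1 = m + 1) := pex_ne
  have ec : (⟨pcn m ((⟨pex m i.1, pex_lt hm i.isLt⟩ : Fin (N + 1))).1,
      pcn_lt hm (pex_lt hm i.isLt)⟩ : Fin N) = i := Fin.ext pcn_pex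
  refine Prod.ext (Fin.ext ?_) ?_
  · show ctr ((psiMap N m hm g ⟨m + 1, by omega⟩).1 : ℕ)
      ((psiMap N m hm g ⟨pex m i.1, pex_lt hm i.isLt⟩).1 : ℕ) = ((g i).1 : ℕ)
    rw [hd, psiMap, dif_neg hpe]
    simp only [ec]
    show ctr _ (exv _ _) = _
    exact ctr_exv
  · show (psiMap N m hm g ⟨pex m i.1, pex_lt hm i.isLt⟩).2 = (g i).2
    rw [psiMap, dif_neg hpe]
    simp only [ec]

def peelEquiv (N m : ℕ) (hm : m < N) (T : Finset ℕ) (hmT : m ∈ T)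
    (hmax : ∀ i ∈ T, i ≤ m) : AA (N + 1) T ≃ AA N (T.erase m) where
  toFun x := ⟨phiMap N m hm x.1, phi_inj hm x.2.1,
    phi_cond hm x.2.1 x.2.2 hmT hmax⟩
  invFun y := ⟨psiMap N m hm y.1, psi_inj hm y.2.1,
    psi_cond hm y.2.1 y.2.2 hmT hmax⟩
  left_inv x := Subtype.ext (psi_phi hm x.2.1 x.2.2 hmT)
  right_inv y := Subtype.ext (phi_psi hm)

def baseEquiv (n : ℕ) : AA n ∅ ≃ (Fin n ↪ Fin n) × (Fin n → Bool) where
  toFun x := (⟨fun i => (x.1 i).1, x.2.1⟩, fun i => (x.1 i).2)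
  invFun y := ⟨fun i => (y.1 i, y.2 i), fun a b h => y.1.injective h,
    fun i hi => absurd hi (Finset.notMem_empty i)⟩
  left_inv x := Subtype.ext (funext fun i => rfl)
  right_inv y := rfl

lemma card_base (n : ℕ) : Nat.card (AA n ∅) = n.factorial * 2 ^ n := by
  rw [Nat.card_congr (baseEquiv n), Nat.card_eq_fintype_card, Fintype.card_prod,
    Fintype.card_embedding_eq, Fintype.card_fun]
  simp [Nat.descFactorial_self]

lemma key (T : Finset ℕ) : ∀ n : ℕ, (∀ i ∈ T, i + 1 < n) →
    Nat.card (AA n T) = (n - T.card).factorial * 2 ^ (n - T.card) := by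
  induction T using Finset.strongInduction with
  | _ T ih =>
    intro n hT
    rcases T.eq_empty_or_nonempty with rfl | hne
    · simpa using card_base n
    · have hmT := T.max'_mem hne
      set m := T.max' hne with hmdef
      have hmn : m + 1 < n := hT m hmT
      obtain ⟨N, rfl⟩ : ∃ N, n = N + 1 := ⟨n - 1, by omega⟩
      have hm : m < N := by omega
      have hmax : ∀ i ∈ T, i ≤ m := fun i hi => T.le_max' i hi
      rw [Nat.card_congr (peelEquiv N m hm T hmT hmax)]
      rw [ih (T.erase m) (Finset.erase_ssubset hmT) N
        (fun i hi => by
          have h2 := Finset.mem_erase.mp hi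
          have := hmax i h2.2
          have : i < m := lt_of_le_of_ne ‹i ≤ m› h2.1
          omega)]
      rw [Finset.card_erase_of_mem hmT]
      have hc : 1 ≤ T.card := Finset.card_pos.mpr hne
      congr 2 <;> omega

lemma filter_card_eq (n : ℕ) (T : Finset ℕ)
    [DecidablePred fun f : Fin n → Fin n × Bool =>
      Function.Injective (fun i => (f i).1) ∧ SCond n T f]
    (hT : ∀ i ∈ T, i + 1 < n) :
    ((Finset.univ.filter (fun f : Fin n → Fin n × Bool =>
      Function.Injective (fun i => (f i).1) ∧ SCond n T f)).card : ℤ)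
    = ((n - T.card).factorial * 2 ^ (n - T.card) : ℕ) := by
  classical
  have h1 : Nat.card (AA n T) = (Finset.univ.filter (fun f : Fin n → Fin n × Bool =>
      Function.Injective (fun i => (f i).1) ∧ SCond n T f)).card := by
    unfold AA
    rw [Nat.card_eq_fintype_card]
    exact Fintype.card_of_subtype _ (fun f => by simp)
  rw [← h1, key T n hT]

end RelDerB

open RelDerB

/-- The number of relative derangements of type B on [n] equals
    n!·2^n + Σ_{k=1}^{n-1} (-1)^k · C(n-1,k) · (n-k)! · 2^{n-k}.
    Encoding: `f : Fin n → Fin n × Bool` with injective first component;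
    index i ↔ number i+1; Bool `true` = unbarred. The relative derangement
    condition forbids π_i = j, π_{i+1} = j+1 and π_i = -j, π_{i+1} = -(j+1). -/
theorem relative_derangement_typeB_formula (n : ℕ) :
    (Fintype.card {f : Fin n → Fin n × Bool //
        Function.Injective (fun i => (f i).1) ∧
        ∀ i j : Fin n, j.val = i.val + 1 →
          ¬((f j).2 = (f i).2 ∧ (f j).1.val = (f i).1.val + 1)} : ℤ) =
      (Nat.factorial n : ℤ) * 2 ^ n +
        ∑ k ∈ Finset.Icc 1 (n - 1),
          (-1 : ℤ) ^ k * (Nat.choose (n - 1) k : ℤ) *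
            (Nat.factorial (n - k) : ℤ) * 2 ^ (n - k) := by
  classical
  obtain ⟨P, hP⟩ : ∃ P : Finset ℕ, P = Finset.range (n - 1) := ⟨_, rfl⟩
  obtain ⟨B, hB⟩ : ∃ B : (Fin n → Fin n × Bool) → Finset ℕ,
      B = fun f => P.filter (fun i =>
        ∀ (h1 : i + 1 < n) (h0 : i < n),
          ((f ⟨i + 1, h1⟩).1 : ℕ) = ((f ⟨i, h0⟩).1 : ℕ) + 1 ∧
          (f ⟨i + 1, h1⟩).2 = (f ⟨i, h0⟩).2) := ⟨_, rfl⟩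
  obtain ⟨U, hU⟩ : ∃ U : Finset (Fin n → Fin n × Bool),
      U = Finset.univ.filter (fun f => Function.Injective (fun i => (f i).1)) :=
    ⟨_, rfl⟩
  -- Step A
  have hA : Fintype.card {f : Fin n → Fin n × Bool //
        Function.Injective (fun i => (f i).1) ∧
        ∀ i j : Fin n, j.val = i.val + 1 →
          ¬((f j).2 = (f i).2 ∧ (f j).1.val = (f i).1.val + 1)}
      = (U.filter (fun f => B f = ∅)).card := by
    refine Fintype.card_of_subtype _ (fun f => ?_)
    rw [hU, Finset.filter_filter, Finset.mem_filter]
    simp only [Finset.mem_univ, true_and]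
    constructor
    · rintro ⟨hinj, hBf⟩
      refine ⟨hinj, ?_⟩
      intro i j hji hcon
      rw [hB] at hBf
      rw [Finset.filter_eq_empty_iff] at hBf
      have hiP : (i : ℕ) ∈ P := by
        rw [hP, Finset.mem_range]
        have := j.isLt
        omega
      refine hBf hiP (fun h1 h0 => ?_)
      have hjj : j = ⟨(i : ℕ) + 1, h1⟩ := Fin.ext hji
      have hii : i = ⟨(i : ℕ), h0⟩ := Fin.ext rfl
      rw [← hjj, ← hii]
      exact ⟨hcon.2, hcon.1⟩
    · rintro ⟨hinj, hno⟩
      refine ⟨hinj, ?_⟩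
      rw [hB, Finset.filter_eq_empty_iff]
      intro i hiP hqi
      rw [hP, Finset.mem_range] at hiP
      have h1 : i + 1 < n := by omega
      have h0 : i < n := by omega
      have := hqi h1 h0
      exact hno ⟨i, h0⟩ ⟨i + 1, h1⟩ rfl ⟨this.2, this.1⟩
  rw [hA]
  -- Step: per-T counts
  have hNT : ∀ T ∈ P.powerset,
      ((U.filter (fun f => T ⊆ B f)).card : ℤ)
      = ((n - T.card).factorial * 2 ^ (n - T.card) : ℕ) := by
    intro T hTP
    have hTsub : T ⊆ P := Finset.mem_powerset.mp hTP
    have hTlt : ∀ i ∈ T, i + 1 < n := by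
      clear hA
      intro i hi
      have h2 := hTsub hi
      rw [hP, Finset.mem_range] at h2
      omega
    have heq : U.filter (fun f => T ⊆ B f)
        = Finset.univ.filter (fun f : Fin n → Fin n × Bool =>
            Function.Injective (fun i => (f i).1) ∧ SCond n T f) := by
      rw [hU, Finset.filter_filter]
      refine Finset.filter_congr (fun f _ => ?_)
      refine and_congr_right (fun _ => ?_)
      constructor
      · intro hsb i hiT h1 h0
        have := hsb hiT
        rw [hB, Finset.mem_filter] at this
        exact this.2 h1 h0
      · intro hsc i hiT
        rw [hB, Finset.mem_filter]
        exact ⟨hTsub hiT, fun h1 h0 => hsc i hiT h1 h0⟩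
    rw [heq]
    exact filter_card_eq n T hTlt
  -- main chain
  have chain : ((U.filter (fun f => B f = ∅)).card : ℤ)
      = ∑ T ∈ P.powerset, (-1 : ℤ) ^ T.card
          * ((n - T.card).factorial * 2 ^ (n - T.card) : ℕ) := by
    calc ((U.filter (fun f => B f = ∅)).card : ℤ)
        = ∑ f ∈ U, (if B f = ∅ then (1 : ℤ) else 0) := by
          rw [Finset.card_filter]
          push_cast
          rfl
      _ = ∑ f ∈ U, ∑ T ∈ P.powerset, (if T ⊆ B f then (-1 : ℤ) ^ T.card else 0) := by
          refine Finset.sum_congr rfl (fun f _ => ?_)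
          have hBP : B f ⊆ P := by rw [hB]; exact Finset.filter_subset _ _
          rw [← Finset.sum_filter]
          have hps : P.powerset.filter (fun T => T ⊆ B f) = (B f).powerset := by
            ext T
            simp only [Finset.mem_filter, Finset.mem_powerset]
            exact ⟨fun h => h.2, fun h => ⟨h.trans hBP, h⟩⟩
          rw [hps, Finset.sum_powerset_neg_one_pow_card]
      _ = ∑ T ∈ P.powerset, ∑ f ∈ U, (if T ⊆ B f then (-1 : ℤ) ^ T.card else 0) :=
          Finset.sum_comm
      _ = ∑ T ∈ P.powerset, (-1 : ℤ) ^ T.card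
          * ((n - T.card).factorial * 2 ^ (n - T.card) : ℕ) := by
          refine Finset.sum_congr rfl (fun T hT => ?_)
          rw [← hNT T hT, ← Finset.sum_filter, Finset.sum_const, nsmul_eq_mul,
            mul_comm]
  rw [chain, Finset.sum_powerset]
  have hinner : ∀ k ∈ Finset.range (P.card + 1),
      (∑ T ∈ Finset.powersetCard k P, ((-1 : ℤ) ^ T.card
        * ((n - T.card).factorial * 2 ^ (n - T.card) : ℕ)))
      = (P.card.choose k : ℤ) * ((-1 : ℤ) ^ k
          * ((n - k).factorial * 2 ^ (n - k) : ℕ)) := by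
    intro k hk
    rw [Finset.sum_congr rfl (fun T hT => by
      rw [(Finset.mem_powersetCard.mp hT).2])]
    rw [Finset.sum_const, Finset.card_powersetCard, nsmul_eq_mul]
  rw [Finset.sum_congr rfl hinner]
  have hPc : P.card = n - 1 := by rw [hP]; exact Finset.card_range (n - 1)
  simp only [hPc]
  have hsplit : Finset.range (n - 1 + 1) = insert 0 (Finset.Icc 1 (n - 1)) := by
    clear hA
    ext x
    simp only [Finset.mem_range, Finset.mem_insert, Finset.mem_Icc]
    omega
  rw [hsplit, Finset.sum_insert (by simp)]
  congr 1
  · simp only [Nat.choose_zero_right, pow_zero, Nat.sub_zero, Nat.cast_one, one_mul]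
    push_cast
    ring
  · refine Finset.sum_congr rfl (fun k hk => ?_)
    push_cast
    ring
end

section
/- There is a bijection between the set of signed skew derangements on [n] whose representation π = π_1 ⋯ π_n satisfies π_n = 0 (unbarred zero in last position) and the set of derangements of type B on [n-1]; hence the number of such signed skew derangements equals D_{n-1}^B. -/
def epsAux (n : ℕ) (w : Fin (n-1) → Fin (n-1)) (c : Fin (n-1) → Bool) : ℕ → Bool
  | 0 => true
  | j+1 =>
    if h : j < n - 1 then
      (if (w ⟨j, h⟩).val = j then !(epsAux n w c j) else c ⟨j, h⟩)
    else true

def fwdFun (n : ℕ) (ε : Fin n → Bool) (g : Fin n → Fin n × Bool) (j : Fin (n-1)) :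
    Fin (n-1) × Bool :=
  (⟨(g ⟨j.val, by have := j.isLt; omega⟩).1.val - 1, by
      have := j.isLt
      have := (g ⟨j.val, by omega⟩).1.isLt
      omega⟩,
   if (g ⟨j.val, by have := j.isLt; omega⟩).1.val = j.val + 1 then false
   else ε ⟨j.val + 1, by have := j.isLt; omega⟩)

def bwdG (n : ℕ) (hn : 1 ≤ n) (f : Fin (n-1) → Fin (n-1) × Bool) (i : Fin n) :
    Fin n × Bool :=
  if h : i.val < n - 1 then
    (⟨((f ⟨i.val, h⟩).1).val + 1, by have := ((f ⟨i.val, h⟩).1).isLt; omega⟩,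
     epsAux n (fun j => (f j).1) (fun j => (f j).2) (((f ⟨i.val, h⟩).1).val + 1))
  else (⟨0, hn⟩, true)

lemma g_ne_zero (n : ℕ) (hn : 1 ≤ n) (g : Fin n → Fin n × Bool)
    (h1 : Function.Injective (fun i => (g i).1))
    (h4 : g ⟨n - 1, Nat.sub_lt hn Nat.one_pos⟩ = (⟨0, hn⟩, true)) :
    ∀ i : Fin n, i.val < n - 1 → (g i).1.val ≠ 0 := by
  intro i hi h0
  have : (g i).1 = (g ⟨n - 1, Nat.sub_lt hn Nat.one_pos⟩).1 := by
    rw [h4]; exact Fin.ext h0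
  have := h1 this
  have := congrArg Fin.val this
  simp at this
  omega

set_option maxHeartbeats 1000000 in
lemma eps_eq (n : ℕ) (hn : 1 ≤ n) (ε : Fin n → Bool) (g : Fin n → Fin n × Bool)
    (h1 : Function.Injective (fun i => (g i).1))
    (h2 : ∀ i, (g i).2 = ε ((g i).1))
    (h3 : ∀ i : Fin n, ¬((g i).1.val = i.val + 1 ∧ (g i).2 = ε i))
    (h4 : g ⟨n - 1, Nat.sub_lt hn Nat.one_pos⟩ = (⟨0, hn⟩, true)) :
    ∀ j, (hj : j < n) →
      epsAux n (fun k => (fwdFun n ε g k).1) (fun k => (fwdFun n ε g k).2) j = ε ⟨j, hj⟩ := by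
  intro j
  induction j with
  | zero =>
    intro hj
    have h2' := h2 ⟨n - 1, Nat.sub_lt hn Nat.one_pos⟩
    rw [h4] at h2'
    simp at h2'
    rw [epsAux]
    exact (h2' ▸ rfl)
  | succ j ih =>
    intro hj
    have hjn : j < n - 1 := by omega
    have hjlt : j < n := by omega
    rw [epsAux, dif_pos hjn]
    have hne := g_ne_zero n hn g h1 h4 ⟨j, hjlt⟩ hjn
    simp only [fwdFun] at ih ⊢
    by_cases hc : (g ⟨j, hjlt⟩).1.val = j + 1
    · have hcond : (g ⟨j, hjlt⟩).1.val - 1 = j := by omega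
      rw [if_pos hcond, ih hjlt]
      have h3' := h3 ⟨j, hjlt⟩
      have h2' := h2 ⟨j, hjlt⟩
      have hfin : (g ⟨j, hjlt⟩).1 = ⟨j + 1, hj⟩ := Fin.ext hc
      have h2'' : (g ⟨j, hjlt⟩).2 = ε ⟨j + 1, hj⟩ := h2'.trans (congrArg ε hfin)
      have hd : ε ⟨j + 1, hj⟩ ≠ ε ⟨j, hjlt⟩ := by
        intro he
        exact h3' ⟨hc, h2''.trans he⟩
      exact (Bool.eq_not_iff.mpr hd).symm
    · have hcond : ¬((g ⟨j, hjlt⟩).1.val - 1 = j) := by omega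
      rw [if_neg hcond]
      exact if_neg hc

lemma fwdFun_fst_val (n : ℕ) (ε : Fin n → Bool) (g : Fin n → Fin n × Bool) (j : Fin (n-1)) :
    ((fwdFun n ε g j).1).val = (g ⟨j.val, by have := j.isLt; omega⟩).1.val - 1 := rfl

lemma fwdFun_snd (n : ℕ) (ε : Fin n → Bool) (g : Fin n → Fin n × Bool) (j : Fin (n-1)) :
    (fwdFun n ε g j).2 =
      if (g ⟨j.val, by have := j.isLt; omega⟩).1.val = j.val + 1 then false
      else ε ⟨j.val + 1, by have := j.isLt; omega⟩ := rfl

lemma bwdG_fst_val (n : ℕ) (hn : 1 ≤ n) (f : Fin (n-1) → Fin (n-1) × Bool) (i : Fin n)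
    (h : i.val < n - 1) :
    ((bwdG n hn f i).1).val = ((f ⟨i.val, h⟩).1).val + 1 := by
  rw [bwdG, dif_pos h]

lemma bwdG_snd (n : ℕ) (hn : 1 ≤ n) (f : Fin (n-1) → Fin (n-1) × Bool) (i : Fin n)
    (h : i.val < n - 1) :
    (bwdG n hn f i).2 =
      epsAux n (fun j => (f j).1) (fun j => (f j).2) (((f ⟨i.val, h⟩).1).val + 1) := by
  rw [bwdG, dif_pos h]

lemma bwdG_last (n : ℕ) (hn : 1 ≤ n) (f : Fin (n-1) → Fin (n-1) × Bool) (i : Fin n)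
    (h : ¬ i.val < n - 1) :
    bwdG n hn f i = (⟨0, hn⟩, true) := by
  rw [bwdG, dif_neg h]

lemma fwd_mem (n : ℕ) (hn : 1 ≤ n) (ε : Fin n → Bool) (g : Fin n → Fin n × Bool)
    (h1 : Function.Injective (fun i => (g i).1))
    (h4 : g ⟨n - 1, Nat.sub_lt hn Nat.one_pos⟩ = (⟨0, hn⟩, true)) :
    Function.Injective (fun j => (fwdFun n ε g j).1) ∧ ∀ j, fwdFun n ε g j ≠ (j, true) := by
  constructor
  · intro a b hab
    have ha := g_ne_zero n hn g h1 h4 ⟨a.val, by have := a.isLt; omega⟩ a.isLt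
    have hb := g_ne_zero n hn g h1 h4 ⟨b.val, by have := b.isLt; omega⟩ b.isLt
    have hv := congrArg Fin.val hab
    rw [fwdFun_fst_val, fwdFun_fst_val] at hv
    have : (g ⟨a.val, by have := a.isLt; omega⟩).1 = (g ⟨b.val, by have := b.isLt; omega⟩).1 :=
      Fin.ext (by omega)
    have := congrArg Fin.val (h1 this)
    exact Fin.ext this
  · intro j hEq
    have hj := g_ne_zero n hn g h1 h4 ⟨j.val, by have := j.isLt; omega⟩ j.isLt
    have hv := congrArg (fun x => (Prod.fst x).val) hEq
    simp only at hv
    rw [fwdFun_fst_val] at hv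
    have hc : (g ⟨j.val, by have := j.isLt; omega⟩).1.val = j.val + 1 := by omega
    have hs := congrArg Prod.snd hEq
    simp only at hs
    rw [fwdFun_snd, if_pos hc] at hs
    exact Bool.false_ne_true hs

lemma bwd_mem (n : ℕ) (hn : 1 ≤ n) (f : Fin (n-1) → Fin (n-1) × Bool)
    (hf1 : Function.Injective (fun j => (f j).1)) (hf2 : ∀ j, f j ≠ (j, true)) :
    Function.Injective (fun i => (bwdG n hn f i).1) ∧
    (∀ i, (bwdG n hn f i).2 =
        epsAux n (fun j => (f j).1) (fun j => (f j).2) ((bwdG n hn f i).1).val) ∧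
    (∀ i : Fin n, ¬(((bwdG n hn f i).1).val = i.val + 1 ∧
        (bwdG n hn f i).2 = epsAux n (fun j => (f j).1) (fun j => (f j).2) i.val)) ∧
    bwdG n hn f ⟨n - 1, Nat.sub_lt hn Nat.one_pos⟩ = (⟨0, hn⟩, true) := by
  refine ⟨?_, ?_, ?_, bwdG_last n hn f _ (by simp)⟩
  · intro a b hab
    have hv : ((bwdG n hn f a).1).val = ((bwdG n hn f b).1).val := congrArg Fin.val hab
    by_cases ha : a.val < n - 1 <;> by_cases hb : b.val < n - 1
    · rw [bwdG_fst_val n hn f a ha, bwdG_fst_val n hn f b hb] at hv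
      have : (f ⟨a.val, ha⟩).1 = (f ⟨b.val, hb⟩).1 := Fin.ext (by omega)
      have := congrArg Fin.val (hf1 this)
      exact Fin.ext this
    · have h0 : ((bwdG n hn f b).1).val = 0 := by rw [bwdG_last n hn f b hb]
      rw [bwdG_fst_val n hn f a ha, h0] at hv
      omega
    · have h0 : ((bwdG n hn f a).1).val = 0 := by rw [bwdG_last n hn f a ha]
      rw [bwdG_fst_val n hn f b hb, h0] at hv
      omega
    · have := a.isLt; have := b.isLt
      exact Fin.ext (by omega)
  · intro i
    by_cases h : i.val < n - 1
    · rw [bwdG_snd n hn f i h, bwdG_fst_val n hn f i h]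
    · rw [bwdG_last n hn f i h]
      rfl
  · intro i hcon
    obtain ⟨hc1, hc2⟩ := hcon
    by_cases h : i.val < n - 1
    · rw [bwdG_fst_val n hn f i h] at hc1
      rw [bwdG_snd n hn f i h] at hc2
      have hw : ((f ⟨i.val, h⟩).1).val = i.val := by omega
      rw [hw] at hc2
      rw [epsAux, dif_pos h] at hc2
      have : (f ⟨i.val, h⟩).1.val = i.val := hw
      rw [if_pos this] at hc2
      simp at hc2
    · rw [congrArg (fun x => (Prod.fst x).val) (bwdG_last n hn f i h)] at hc1
      simp at hc1

lemma fwdFun_fst_val' (n : ℕ) (ε : Fin n → Bool) (g : Fin n → Fin n × Bool) (j : Fin (n-1))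
    (i : Fin n) (hij : i.val = j.val) :
    ((fwdFun n ε g j).1).val = (g i).1.val - 1 := by
  have h : i = ⟨j.val, by have := j.isLt; omega⟩ := Fin.ext hij
  rw [h]; rfl

lemma fwdFun_snd' (n : ℕ) (ε : Fin n → Bool) (g : Fin n → Fin n × Bool) (j : Fin (n-1))
    (i : Fin n) (hij : i.val = j.val) (i' : Fin n) (hi' : i'.val = j.val + 1) :
    (fwdFun n ε g j).2 = if (g i).1.val = j.val + 1 then false else ε i' := by
  have h : i = ⟨j.val, by have := j.isLt; omega⟩ := Fin.ext hij
  have h' : i' = ⟨j.val + 1, by have := j.isLt; omega⟩ := Fin.ext hi'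
  simp only [h, h']; rfl

lemma bwdG_fst_val' (n : ℕ) (hn : 1 ≤ n) (f : Fin (n-1) → Fin (n-1) × Bool) (i : Fin n)
    (h : i.val < n - 1) (j : Fin (n-1)) (hij : j.val = i.val) :
    ((bwdG n hn f i).1).val = ((f j).1).val + 1 := by
  have hj : j = ⟨i.val, h⟩ := Fin.ext hij
  rw [hj, bwdG, dif_pos h]

lemma bwdG_snd' (n : ℕ) (hn : 1 ≤ n) (f : Fin (n-1) → Fin (n-1) × Bool) (i : Fin n)
    (h : i.val < n - 1) (j : Fin (n-1)) (hij : j.val = i.val) :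
    (bwdG n hn f i).2 =
      epsAux n (fun k => (f k).1) (fun k => (f k).2) (((f j).1).val + 1) := by
  have hj : j = ⟨i.val, h⟩ := Fin.ext hij
  rw [hj, bwdG, dif_pos h]

lemma left_inv_lem (n : ℕ) (hn : 1 ≤ n) (ε : Fin n → Bool) (g : Fin n → Fin n × Bool)
    (h1 : Function.Injective (fun i => (g i).1))
    (h2 : ∀ i, (g i).2 = ε ((g i).1))
    (h3 : ∀ i : Fin n, ¬((g i).1.val = i.val + 1 ∧ (g i).2 = ε i))
    (h4 : g ⟨n - 1, Nat.sub_lt hn Nat.one_pos⟩ = (⟨0, hn⟩, true)) :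
    (fun i : Fin n =>
      epsAux n (fun k => (fwdFun n ε g k).1) (fun k => (fwdFun n ε g k).2) i.val) = ε ∧
    bwdG n hn (fwdFun n ε g) = g := by
  constructor
  · funext i
    rw [eps_eq n hn ε g h1 h2 h3 h4 i.val i.isLt]
  · funext i
    by_cases h : i.val < n - 1
    · have hne := g_ne_zero n hn g h1 h4 i h
      have hlt := (g i).1.isLt
      apply Prod.ext
      · apply Fin.ext
        rw [bwdG_fst_val' n hn (fwdFun n ε g) i h ⟨i.val, h⟩ rfl,
          fwdFun_fst_val' n ε g ⟨i.val, h⟩ i rfl]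
        omega
      · rw [bwdG_snd' n hn (fwdFun n ε g) i h ⟨i.val, h⟩ rfl,
          fwdFun_fst_val' n ε g ⟨i.val, h⟩ i rfl]
        have hv : (g i).1.val - 1 + 1 = (g i).1.val := by omega
        rw [hv, eps_eq n hn ε g h1 h2 h3 h4 _ (g i).1.isLt, h2 i]
    · have hi : i = ⟨n - 1, Nat.sub_lt hn Nat.one_pos⟩ := Fin.ext (by simp; have := i.isLt; omega)
      rw [hi, bwdG_last n hn _ _ (by simp)]
      exact h4.symm

lemma right_inv_lem (n : ℕ) (hn : 1 ≤ n) (f : Fin (n-1) → Fin (n-1) × Bool)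
    (hf2 : ∀ j, f j ≠ (j, true)) :
    fwdFun n (fun i : Fin n => epsAux n (fun k => (f k).1) (fun k => (f k).2) i.val)
      (bwdG n hn f) = f := by
  funext j
  have hj := j.isLt
  have hjn : j.val < n := by omega
  apply Prod.ext
  · apply Fin.ext
    rw [fwdFun_fst_val' n _ _ j ⟨j.val, hjn⟩ rfl,
      bwdG_fst_val' n hn f ⟨j.val, hjn⟩ hj j rfl]
    simp
  · rw [fwdFun_snd' n _ _ j ⟨j.val, hjn⟩ rfl ⟨j.val + 1, by omega⟩ rfl,
      bwdG_fst_val' n hn f ⟨j.val, hjn⟩ hj j rfl]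
    have hE : epsAux n (fun k => (f k).1) (fun k => (f k).2) (j.val + 1) =
        if ((f j).1).val = j.val then !(epsAux n (fun k => (f k).1) (fun k => (f k).2) j.val)
        else (f j).2 := by
      rw [epsAux, dif_pos hj]
    by_cases hw : ((f j).1).val = j.val
    · rw [if_pos (by omega)]
      cases hb : (f j).2
      · rfl
      · exact absurd (Prod.ext (Fin.ext hw) hb) (hf2 j)
    · rw [if_neg (by omega), hE, if_neg hw]


/-- Signed skew derangements on [n] whose representation ends with unbarred 0
    are in bijection with derangements of type B on [n-1]; in particular they
    number D_{n-1}^B. Encoding: a signed skew derangement is a pair (ε, g)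
    with ε : Fin n → Bool the signs of X and `g i = (v, b)` the image
    (value v ∈ {0,…,n-1}, sign b) of the element ±(i+1) of X; the sign of the
    element of X-1 with value v is ε v; no element is fixed. The
    representation lists g in increasing order of underlying value, so its
    last entry is `g ⟨n-1,_⟩`; `(⟨0,_⟩, true)` is unbarred 0. -/
theorem skew_derangement_last_zero (n : ℕ) (hn : 1 ≤ n) :
    Nonempty
      ({p : (Fin n → Bool) × (Fin n → Fin n × Bool) //
          Function.Injective (fun i => (p.2 i).1) ∧
          (∀ i, (p.2 i).2 = p.1 ((p.2 i).1)) ∧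
          (∀ i : Fin n, ¬((p.2 i).1.val = i.val + 1 ∧ (p.2 i).2 = p.1 i)) ∧
          p.2 ⟨n - 1, by omega⟩ = (⟨0, by omega⟩, true)} ≃
        {f : Fin (n - 1) → Fin (n - 1) × Bool //
          Function.Injective (fun i => (f i).1) ∧ ∀ i, f i ≠ (i, true)}) ∧
    Fintype.card {p : (Fin n → Bool) × (Fin n → Fin n × Bool) //
        Function.Injective (fun i => (p.2 i).1) ∧
        (∀ i, (p.2 i).2 = p.1 ((p.2 i).1)) ∧
        (∀ i : Fin n, ¬((p.2 i).1.val = i.val + 1 ∧ (p.2 i).2 = p.1 i)) ∧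
        p.2 ⟨n - 1, by omega⟩ = (⟨0, by omega⟩, true)} =
      Fintype.card {f : Fin (n - 1) → Fin (n - 1) × Bool //
        Function.Injective (fun i => (f i).1) ∧ ∀ i, f i ≠ (i, true)} := by
  have e : {p : (Fin n → Bool) × (Fin n → Fin n × Bool) //
          Function.Injective (fun i => (p.2 i).1) ∧
          (∀ i, (p.2 i).2 = p.1 ((p.2 i).1)) ∧
          (∀ i : Fin n, ¬((p.2 i).1.val = i.val + 1 ∧ (p.2 i).2 = p.1 i)) ∧
          p.2 ⟨n - 1, by omega⟩ = (⟨0, by omega⟩, true)} ≃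
        {f : Fin (n - 1) → Fin (n - 1) × Bool //
          Function.Injective (fun i => (f i).1) ∧ ∀ i, f i ≠ (i, true)} := by
    refine ⟨fun p => ⟨fwdFun n p.1.1 p.1.2, ?_⟩,
      fun f => ⟨(fun i : Fin n => epsAux n (fun k => (f.1 k).1) (fun k => (f.1 k).2) i.val,
        bwdG n hn f.1), ?_⟩, ?_, ?_⟩
    · exact fwd_mem n hn p.1.1 p.1.2 p.2.1 p.2.2.2.2
    · obtain ⟨b1, b2, b3, b4⟩ := bwd_mem n hn f.1 f.2.1 f.2.2
      exact ⟨b1, b2, b3, b4⟩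
    · rintro ⟨⟨ε, g⟩, h1, h2, h3, h4⟩
      obtain ⟨l1, l2⟩ := left_inv_lem n hn ε g h1 h2 h3 h4
      exact Subtype.ext (Prod.ext l1 l2)
    · rintro ⟨f, hf1, hf2⟩
      exact Subtype.ext (right_inv_lem n hn f hf2)
  exact ⟨⟨e⟩, Fintype.card_congr e⟩
end

section
/- For all n ≥ 1, n!·Σ_{k=0}^{n}(-1)^k·2^{n-k}/k! + (n-1)!·Σ_{k=0}^{n-1}(-1)^k·2^{n-1-k}/k! = n!·2^n + Σ_{k=1}^{n-1}(-1)^k·C(n-1,k)·(n-k)!·2^{n-k} (with the convention that the n = 1 case of the first summand's second term is 1). -/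
private lemma sum_split_bot (F : ℕ → ℚ) (m : ℕ) :
    ∑ k ∈ Finset.range (m + 1), F k = F 0 + ∑ k ∈ Finset.Icc 1 m, F k := by
  rw [Finset.range_eq_Ico, Finset.sum_eq_sum_Ico_succ_bot (Nat.succ_pos m)]
  congr 1

/-- The algebraic identity D_n^B + D_{n-1}^B = Q_n^B via the closed formulas:
    for all n ≥ 1,
    n!·Σ_{k=0}^{n}(-1)^k 2^{n-k}/k! + (n-1)!·Σ_{k=0}^{n-1}(-1)^k 2^{n-1-k}/k!
      = n!·2^n + Σ_{k=1}^{n-1}(-1)^k C(n-1,k)(n-k)!·2^{n-k}. -/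
theorem typeB_identity (n : ℕ) (hn : 1 ≤ n) :
    (Nat.factorial n : ℚ) *
        ∑ k ∈ Finset.range (n + 1), (-1 : ℚ) ^ k * 2 ^ (n - k) / (Nat.factorial k : ℚ) +
      (Nat.factorial (n - 1) : ℚ) *
        ∑ k ∈ Finset.range n, (-1 : ℚ) ^ k * 2 ^ (n - 1 - k) / (Nat.factorial k : ℚ) =
    (Nat.factorial n : ℚ) * 2 ^ n +
      ∑ k ∈ Finset.Icc 1 (n - 1),
        (-1 : ℚ) ^ k * (Nat.choose (n - 1) k : ℚ) *
          (Nat.factorial (n - k) : ℚ) * 2 ^ (n - k) := by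
  obtain ⟨m, rfl⟩ := Nat.exists_eq_add_of_le' hn
  simp only [Nat.add_sub_cancel]
  set g : ℕ → ℚ := fun k =>
    (-1 : ℚ) ^ k * k * 2 ^ (m + 1 - k) * (Nat.factorial m : ℚ) / (Nat.factorial k : ℚ)
    with hg
  -- RHS as a single sum over range (m+1)
  have h3 : (Nat.factorial (m + 1) : ℚ) * 2 ^ (m + 1) +
      ∑ k ∈ Finset.Icc 1 m,
        (-1 : ℚ) ^ k * (Nat.choose m k : ℚ) *
          (Nat.factorial (m + 1 - k) : ℚ) * 2 ^ (m + 1 - k)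
      = ∑ k ∈ Finset.range (m + 1),
        (-1 : ℚ) ^ k * (Nat.choose m k : ℚ) *
          (Nat.factorial (m + 1 - k) : ℚ) * 2 ^ (m + 1 - k) := by
    rw [sum_split_bot]
    norm_num
  -- split top term of first sum
  have h1 : ∑ k ∈ Finset.range (m + 1 + 1),
      (-1 : ℚ) ^ k * 2 ^ (m + 1 - k) / (Nat.factorial k : ℚ)
      = (∑ k ∈ Finset.range (m + 1),
          (-1 : ℚ) ^ k * 2 ^ (m + 1 - k) / (Nat.factorial k : ℚ)) +
        (-1 : ℚ) ^ (m + 1) / (Nat.factorial (m + 1) : ℚ) := by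
    rw [Finset.sum_range_succ]
    norm_num
  rw [h1, h3, mul_add, Finset.mul_sum, Finset.mul_sum]
  have hfac : ((Nat.factorial (m + 1) : ℚ)) ≠ 0 := by
    exact_mod_cast Nat.factorial_ne_zero (m + 1)
  have htop : (Nat.factorial (m + 1) : ℚ) *
      ((-1 : ℚ) ^ (m + 1) / (Nat.factorial (m + 1) : ℚ)) = (-1 : ℚ) ^ (m + 1) := by
    field_simp
  rw [htop]
  -- telescoping
  have tele : ∑ k ∈ Finset.range (m + 1), (g (k + 1) - g k) = g (m + 1) - g 0 :=
    Finset.sum_range_sub g (m + 1)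
  have hg0 : g 0 = 0 := by simp [hg]
  have hgtop : g (m + 1) = (-1 : ℚ) ^ (m + 1) := by
    have : ((Nat.factorial m : ℚ)) ≠ 0 := by
      exact_mod_cast Nat.factorial_ne_zero m
    simp only [hg, Nat.sub_self, pow_zero, Nat.factorial_succ]
    push_cast
    field_simp
  -- termwise identity
  have key : ∀ k ∈ Finset.range (m + 1),
      (-1 : ℚ) ^ k * (Nat.choose m k : ℚ) *
          (Nat.factorial (m + 1 - k) : ℚ) * 2 ^ (m + 1 - k)
        - (Nat.factorial (m + 1) : ℚ) *
            ((-1 : ℚ) ^ k * 2 ^ (m + 1 - k) / (Nat.factorial k : ℚ))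
        - (Nat.factorial m : ℚ) *
            ((-1 : ℚ) ^ k * 2 ^ (m - k) / (Nat.factorial k : ℚ))
      = g (k + 1) - g k := by
    intro k hk
    rw [Finset.mem_range] at hk
    have hkm : k ≤ m := Nat.lt_succ_iff.mp hk
    have hsub : m + 1 - k = (m - k) + 1 := by omega
    have hsub2 : m + 1 - (k + 1) = m - k := by omega
    have hkfac : ((Nat.factorial k : ℚ)) ≠ 0 := by
      exact_mod_cast Nat.factorial_ne_zero k
    have hmkfac : ((Nat.factorial (m - k) : ℚ)) ≠ 0 := by
      exact_mod_cast Nat.factorial_ne_zero (m - k)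
    rw [Nat.cast_choose ℚ hkm]
    simp only [hg, hsub, hsub2, Nat.factorial_succ, pow_succ]
    push_cast
    field_simp
    ring
    rw [Nat.cast_sub hkm]
    ring
  have hsum := Finset.sum_congr rfl key
  rw [Finset.sum_sub_distrib, Finset.sum_sub_distrib] at hsum
  rw [tele, hg0, hgtop] at hsum
  linarith [hsum]
end

section
/- The restriction of the bijection between relative derangements of type B and signed skew derangements on [n] to unsigned objects yields a bijection between ordinary relative derangements on [n] and ordinary skew derangements on [n] (bijections f: [n] → {0,1,...,n-1} with f(i) ≠ i); in particular the number of relative derangements on [n] equals the number of skew derangements on [n]. -/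
open Finset

namespace RelSkew


/-- leader of the block containing position `p`, blocks glued along `Sn`. -/
def ldr (Sn : Finset ℕ) : ℕ → ℕ
  | 0 => 0
  | (p+1) => if p ∈ Sn then ldr Sn p else p+1

variable {Sn : Finset ℕ} {n : ℕ}

lemma ldr_le (p : ℕ) : ldr Sn p ≤ p := by
  induction p with
  | zero => simp [ldr]
  | succ p ih =>
    rw [ldr]
    split
    · exact ih.trans (Nat.le_succ p)
    · exact le_refl _

lemma ldr_mem {p : ℕ} (h : p ∈ Sn) : ldr Sn (p+1) = ldr Sn p := by
  rw [ldr]; simp [h]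

lemma ldr_not_mem {p : ℕ} (h : p ∉ Sn) : ldr Sn (p+1) = p+1 := by
  rw [ldr]; simp [h]

lemma ldr_interval : ∀ p q : ℕ, ldr Sn p ≤ q → q ≤ p → ldr Sn q = ldr Sn p := by
  intro p
  induction p with
  | zero => intro q _ h2; interval_cases q; rfl
  | succ p ih =>
    intro q h1 h2
    by_cases hp : p ∈ Sn
    · rw [ldr_mem hp] at h1 ⊢
      rcases Nat.lt_or_ge q (p+1) with h | h
      · exact ih q h1 (Nat.lt_succ_iff.mp h)
      · have : q = p + 1 := le_antisymm h2 h
        subst this; exact ldr_mem hp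
    · rw [ldr_not_mem hp] at h1 ⊢
      have : q = p + 1 := le_antisymm h2 h1
      subst this; exact ldr_not_mem hp

lemma ldr_idem (p : ℕ) : ldr Sn (ldr Sn p) = ldr Sn p :=
  ldr_interval p (ldr Sn p) (le_refl _) (ldr_le p)

lemma ldr_eq_self_iff : ∀ {p : ℕ}, ldr Sn p = p ↔ ∀ q ∈ Sn, q + 1 ≠ p := by
  intro p
  cases p with
  | zero => simp [ldr]
  | succ p =>
    constructor
    · intro h q hq hqp
      have hq' : p ∈ Sn := by
        have hqe : q = p := by omega
        rwa [hqe] at hq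
      rw [ldr_mem hq'] at h
      have := ldr_le (Sn := Sn) p; omega
    · intro h
      have hp : p ∉ Sn := fun hp => h p hp rfl
      exact ldr_not_mem hp

/-- length of the block with leader `ℓ` inside `[0,n)`. -/
def blen (Sn : Finset ℕ) (n ℓ : ℕ) : ℕ :=
  ((Finset.range n).filter (fun p => ldr Sn p = ℓ)).card

lemma off_lt_blen {p : ℕ} (hp : p < n) : p - ldr Sn p < blen Sn n (ldr Sn p) := by
  have hsub : Finset.Ico (ldr Sn p) (p+1) ⊆
      (Finset.range n).filter (fun q => ldr Sn q = ldr Sn p) := by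
    intro q hq
    rw [Finset.mem_Ico] at hq
    rw [Finset.mem_filter, Finset.mem_range]
    exact ⟨by omega, ldr_interval p q hq.1 (by omega)⟩
  have := Finset.card_le_card hsub
  rw [Nat.card_Ico] at this
  have hle := ldr_le (Sn := Sn) p
  unfold blen
  omega

lemma mem_block {ℓ t : ℕ} (hℓ : ldr Sn ℓ = ℓ) (ht : t < blen Sn n ℓ) :
    ℓ + t < n ∧ ldr Sn (ℓ + t) = ℓ := by
  unfold blen at ht
  have hex : ∃ q ∈ (Finset.range n).filter (fun p => ldr Sn p = ℓ), ℓ + t ≤ q := by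
    by_contra hcon
    push_neg at hcon
    have hsub : (Finset.range n).filter (fun p => ldr Sn p = ℓ) ⊆
        Finset.Ico ℓ (ℓ + t) := by
      intro q hq
      have hq' := hq
      rw [Finset.mem_filter] at hq'
      have h1 : ldr Sn q = ℓ := hq'.2
      have h2 := ldr_le (Sn := Sn) q
      have h3 := hcon q hq
      rw [Finset.mem_Ico]
      omega
    have := Finset.card_le_card hsub
    rw [Nat.card_Ico] at this
    omega
  obtain ⟨q, hq, hle⟩ := hex
  rw [Finset.mem_filter, Finset.mem_range] at hq
  have h1 : ℓ + t < n := by omega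
  refine ⟨h1, ?_⟩
  have h2 : ldr Sn (ℓ + t) = ldr Sn q := ldr_interval q (ℓ+t) (by rw [hq.2]; omega) hle
  rw [h2, hq.2]

lemma blen_pos {ℓ : ℕ} (hℓ : ldr Sn ℓ = ℓ) (hn : ℓ < n) : 0 < blen Sn n ℓ := by
  apply Finset.card_pos.mpr
  exact ⟨ℓ, by rw [Finset.mem_filter, Finset.mem_range]; exact ⟨hn, hℓ⟩⟩


section
variable {Sn : Finset ℕ} {n : ℕ}

lemma ldr_zero : ldr Sn 0 = 0 := rfl

/-- the relative-derangement-side constraint attached to `Sn`. -/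
def CAprop (Sn : Finset ℕ) {n : ℕ} (π : Equiv.Perm (Fin n)) : Prop :=
  ∀ q ∈ Sn, ∀ (h1 : q+1 < n) (h2 : q < n),
    (π ⟨q+1, h1⟩).val = (π ⟨q, h2⟩).val + 1

lemma ca_val {π : Equiv.Perm (Fin n)} (hπ : CAprop Sn π) :
    ∀ (k : ℕ) (hk : k < n), (π ⟨k, hk⟩).val
      = (π ⟨ldr Sn k, lt_of_le_of_lt (ldr_le k) hk⟩).val + (k - ldr Sn k) := by
  intro k
  induction k with
  | zero =>
    intro hk
    have hfin : (⟨ldr Sn 0, lt_of_le_of_lt (ldr_le 0) hk⟩ : Fin n) = ⟨0, hk⟩ :=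
      Fin.ext (ldr_zero (Sn := Sn))
    rw [hfin, ldr_zero]
    omega
  | succ k ih =>
    intro hk
    have h2 : k < n := by omega
    by_cases hkS : k ∈ Sn
    · have hstep := hπ k hkS hk h2
      rw [hstep, ih h2]
      have hle := ldr_le (Sn := Sn) k
      have hm : ldr Sn (k+1) = ldr Sn k := ldr_mem hkS
      have hfin : (⟨ldr Sn (k+1), lt_of_le_of_lt (ldr_le _) hk⟩ : Fin n)
          = ⟨ldr Sn k, lt_of_le_of_lt (ldr_le k) h2⟩ := Fin.ext hm
      rw [hfin, hm]
      omega
    · have hm : ldr Sn (k+1) = k+1 := ldr_not_mem hkS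
      have hfin : (⟨ldr Sn (k+1), lt_of_le_of_lt (ldr_le _) hk⟩ : Fin n)
          = ⟨k+1, hk⟩ := Fin.ext hm
      rw [hfin, hm]
      omega

lemma ca_packed {π : Equiv.Perm (Fin n)} (hπ : CAprop Sn π) {ℓ ℓ' : ℕ}
    (hℓ : ldr Sn ℓ = ℓ) (hℓ' : ldr Sn ℓ' = ℓ') (hn1 : ℓ < n) (hn' : ℓ' < n)
    (hlt : (π ⟨ℓ', hn'⟩).val < (π ⟨ℓ, hn1⟩).val) :
    (π ⟨ℓ', hn'⟩).val + blen Sn n ℓ' ≤ (π ⟨ℓ, hn1⟩).val := by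
  by_contra hcon
  push_neg at hcon
  set a := (π ⟨ℓ', hn'⟩).val with ha
  set b := (π ⟨ℓ, hn1⟩).val with hb
  have ht : b - a < blen Sn n ℓ' := by omega
  obtain ⟨hq1, hq2⟩ := mem_block (n := n) hℓ' ht
  have hv := ca_val hπ (ℓ' + (b-a)) hq1
  have hfin : (⟨ldr Sn (ℓ' + (b-a)), lt_of_le_of_lt (ldr_le _) hq1⟩ : Fin n)
      = ⟨ℓ', hn'⟩ := Fin.ext hq2
  rw [hfin, hq2] at hv
  have hv2 : (π ⟨ℓ' + (b-a), hq1⟩).val = b := by omega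
  have : (⟨ℓ' + (b-a), hq1⟩ : Fin n) = ⟨ℓ, hn1⟩ := π.injective (Fin.ext hv2)
  have hval : ℓ' + (b-a) = ℓ := congrArg Fin.val this
  rw [← hval] at hℓ
  rw [hq2] at hℓ
  omega

lemma card_filter_val_lt (v : Fin n) :
    ((univ : Finset (Fin n)).filter (fun w => w.val < v.val)).card = v.val := by
  have h := Finset.card_bij (s := (univ : Finset (Fin n)).filter (fun w => w.val < v.val))
      (t := Finset.range v.val) (fun (w : Fin n) _ => w.val)
      (by
        intro w hw
        rw [Finset.mem_filter] at hw
        exact Finset.mem_range.mpr hw.2)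
      (by
        intro w1 h1 w2 h2 h
        exact Fin.ext h)
      (by
        intro k hk
        rw [Finset.mem_range] at hk
        exact ⟨⟨k, lt_trans hk v.isLt⟩, Finset.mem_filter.mpr ⟨Finset.mem_univ _, hk⟩, rfl⟩)
  rw [Finset.card_range] at h
  exact h


/-- block leaders, as a finset of `Fin n`. -/
noncomputable def Lf (Sn : Finset ℕ) (n : ℕ) : Finset (Fin n) :=
  univ.filter (fun p => ldr Sn p.val = p.val)

/-- the leader of (the block of) a position. -/
noncomputable def ldrF (Sn : Finset ℕ) {n : ℕ} (p : Fin n) : ↥(Lf Sn n) :=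
  ⟨⟨ldr Sn p.val, lt_of_le_of_lt (ldr_le _) p.isLt⟩, by
    simp only [Lf, Finset.mem_filter]
    exact ⟨Finset.mem_univ _, ldr_idem _⟩⟩

lemma ldrF_leader (ℓ : ↥(Lf Sn n)) : ldr Sn ℓ.val.val = ℓ.val.val := by
  have h := ℓ.prop
  simp only [Lf, Finset.mem_filter] at h
  exact h.2

lemma ldrF_self (ℓ : ↥(Lf Sn n)) : ldrF Sn ℓ.val = ℓ :=
  Subtype.ext (Fin.ext (ldrF_leader ℓ))

lemma ldrF_val (p : Fin n) : ((ldrF Sn p).val : ℕ) = ldr Sn p.val := rfl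

lemma card_fiber (ℓ : ↥(Lf Sn n)) :
    ((univ : Finset (Fin n)).filter (fun p => ldrF Sn p = ℓ)).card
      = blen Sn n ℓ.val.val := by
  rw [blen]
  apply Finset.card_bij (fun (p : Fin n) _ => p.val)
  · intro p hp
    rw [Finset.mem_filter] at hp
    rw [Finset.mem_filter, Finset.mem_range]
    have h2 : ldr Sn p.val = ℓ.val.val := by
      rw [← ldrF_val (Sn := Sn) p, hp.2]
    exact ⟨p.isLt, h2⟩
  · intro p1 h1 p2 h2 h
    exact Fin.ext h
  · intro k hk
    rw [Finset.mem_filter, Finset.mem_range] at hk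
    refine ⟨⟨k, hk.1⟩, Finset.mem_filter.mpr ⟨Finset.mem_univ _, ?_⟩, rfl⟩
    exact Subtype.ext (Fin.ext hk.2)

lemma sum_blen : ∑ ℓ' ∈ (univ : Finset ↥(Lf Sn n)), blen Sn n ℓ'.val.val = n := by
  have h := Finset.card_eq_sum_card_fiberwise
    (s := (univ : Finset (Fin n))) (t := (univ : Finset ↥(Lf Sn n)))
    (f := ldrF Sn) (fun p _ => Finset.mem_univ _)
  rw [Finset.card_univ, Fintype.card_fin] at h
  exact (Finset.sum_congr rfl (fun ℓ _ => (card_fiber ℓ).symm)).trans h.symm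

lemma ca_count {π : Equiv.Perm (Fin n)} (hπ : CAprop Sn π) (ℓ : ↥(Lf Sn n)) :
    (π ℓ.val).val = ∑ ℓ' ∈ (univ : Finset ↥(Lf Sn n)).filter
        (fun ℓ' => (π ℓ'.val).val < (π ℓ.val).val), blen Sn n ℓ'.val.val := by
  have hval : ∀ p : Fin n, (π p).val = (π (ldrF Sn p).val).val + (p.val - ldr Sn p.val) :=
    fun p => ca_val hπ p.val p.isLt
  have h1 : (π ℓ.val).val
      = ((univ : Finset (Fin n)).filter (fun w => w.val < (π ℓ.val).val)).card :=
    (card_filter_val_lt _).symm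
  have h2 : ((univ : Finset (Fin n)).filter (fun p => (π p).val < (π ℓ.val).val)).card
      = ((univ : Finset (Fin n)).filter (fun w => w.val < (π ℓ.val).val)).card := by
    apply Finset.card_bij (fun (p : Fin n) _ => π p)
    · intro p hp
      rw [Finset.mem_filter] at hp ⊢
      exact ⟨Finset.mem_univ _, hp.2⟩
    · intro p1 h1 p2 h2 h
      exact π.injective h
    · intro w hw
      rw [Finset.mem_filter] at hw
      refine ⟨π.symm w, Finset.mem_filter.mpr ⟨Finset.mem_univ _, ?_⟩, π.apply_symm_apply w⟩
      rw [π.apply_symm_apply]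
      exact hw.2
  have h3 := Finset.card_eq_sum_card_fiberwise
    (s := (univ : Finset (Fin n)).filter (fun p => (π p).val < (π ℓ.val).val))
    (t := (univ : Finset ↥(Lf Sn n)).filter (fun ℓ' => (π ℓ'.val).val < (π ℓ.val).val))
    (f := ldrF Sn)
    (by
      intro p hp
      rw [Finset.mem_coe, Finset.mem_filter] at hp ⊢
      refine ⟨Finset.mem_univ _, ?_⟩
      have h4 := hval p
      omega)
  have h5 : ∀ ℓ' ∈ (univ : Finset ↥(Lf Sn n)).filter
      (fun ℓ' => (π ℓ'.val).val < (π ℓ.val).val),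
      (((univ : Finset (Fin n)).filter (fun p => (π p).val < (π ℓ.val).val)).filter
        (fun p => ldrF Sn p = ℓ')).card = blen Sn n ℓ'.val.val := by
    intro ℓ' hℓ'
    rw [Finset.mem_filter] at hℓ'
    rw [← card_fiber ℓ']
    congr 1
    ext p
    simp only [Finset.mem_filter, Finset.mem_univ, true_and]
    constructor
    · intro h
      exact h.2
    · intro h
      refine ⟨?_, h⟩
      have hvp := hval p
      have hl : ldr Sn p.val = ℓ'.val.val := by rw [← ldrF_val (Sn := Sn) p, h]
      have hoff : p.val - ldr Sn p.val < blen Sn n ℓ'.val.val := by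
        have h6 := off_lt_blen (Sn := Sn) (n := n) p.isLt
        rw [hl] at h6
        omega
      have hpacked : (π ℓ'.val).val + blen Sn n ℓ'.val.val ≤ (π ℓ.val).val :=
        ca_packed hπ (ldrF_leader ℓ) (ldrF_leader ℓ') ℓ.val.isLt ℓ'.val.isLt hℓ'.2
      have h7 : (π (ldrF Sn p).val).val = (π ℓ'.val).val := by rw [h]
      omega
  exact h1.trans (h2.symm.trans (h3.trans (Finset.sum_congr rfl h5)))

noncomputable def startv (Sn : Finset ℕ) {n : ℕ} (τ : ↥(Lf Sn n) ≃ Fin (Lf Sn n).card)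
    (ℓ : ↥(Lf Sn n)) : ℕ :=
  ∑ ℓ' ∈ (univ : Finset ↥(Lf Sn n)).filter (fun ℓ' => τ ℓ' < τ ℓ), blen Sn n ℓ'.val.val

lemma startv_add_le (τ : ↥(Lf Sn n) ≃ Fin (Lf Sn n).card) (ℓ : ↥(Lf Sn n)) :
    startv Sn τ ℓ + blen Sn n ℓ.val.val ≤ n := by
  have hnm : ℓ ∉ (univ : Finset ↥(Lf Sn n)).filter (fun ℓ' => τ ℓ' < τ ℓ) := by
    rw [Finset.mem_filter]
    exact fun h => lt_irrefl _ h.2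
  have h1 : ∑ ℓ' ∈ insert ℓ ((univ : Finset ↥(Lf Sn n)).filter (fun ℓ' => τ ℓ' < τ ℓ)),
      blen Sn n ℓ'.val.val = blen Sn n ℓ.val.val
        + ∑ ℓ' ∈ (univ : Finset ↥(Lf Sn n)).filter (fun ℓ' => τ ℓ' < τ ℓ),
          blen Sn n ℓ'.val.val :=
    Finset.sum_insert hnm
  have h2 : ∑ ℓ' ∈ insert ℓ ((univ : Finset ↥(Lf Sn n)).filter (fun ℓ' => τ ℓ' < τ ℓ)),
      blen Sn n ℓ'.val.val ≤ ∑ ℓ' ∈ (univ : Finset ↥(Lf Sn n)), blen Sn n ℓ'.val.val :=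
    Finset.sum_le_sum_of_subset (fun x _ => Finset.mem_univ x)
  rw [h1, sum_blen] at h2
  rw [startv]
  omega

lemma startv_mono (τ : ↥(Lf Sn n) ≃ Fin (Lf Sn n).card) {ℓ₁ ℓ₂ : ↥(Lf Sn n)}
    (h : τ ℓ₁ < τ ℓ₂) :
    startv Sn τ ℓ₁ + blen Sn n ℓ₁.val.val ≤ startv Sn τ ℓ₂ := by
  have hnm : ℓ₁ ∉ (univ : Finset ↥(Lf Sn n)).filter (fun ℓ' => τ ℓ' < τ ℓ₁) := by
    rw [Finset.mem_filter]
    exact fun h' => lt_irrefl _ h'.2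
  have h1 : ∑ ℓ' ∈ insert ℓ₁ ((univ : Finset ↥(Lf Sn n)).filter (fun ℓ' => τ ℓ' < τ ℓ₁)),
      blen Sn n ℓ'.val.val = blen Sn n ℓ₁.val.val
        + ∑ ℓ' ∈ (univ : Finset ↥(Lf Sn n)).filter (fun ℓ' => τ ℓ' < τ ℓ₁),
          blen Sn n ℓ'.val.val :=
    Finset.sum_insert hnm
  have hsub : insert ℓ₁ ((univ : Finset ↥(Lf Sn n)).filter (fun ℓ' => τ ℓ' < τ ℓ₁))
      ⊆ (univ : Finset ↥(Lf Sn n)).filter (fun ℓ' => τ ℓ' < τ ℓ₂) := by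
    intro x hx
    rw [Finset.mem_insert] at hx
    rw [Finset.mem_filter]
    rcases hx with rfl | hx
    · exact ⟨Finset.mem_univ _, h⟩
    · rw [Finset.mem_filter] at hx
      exact ⟨Finset.mem_univ _, lt_trans hx.2 h⟩
  have h2 : ∑ ℓ' ∈ insert ℓ₁ ((univ : Finset ↥(Lf Sn n)).filter (fun ℓ' => τ ℓ' < τ ℓ₁)),
      blen Sn n ℓ'.val.val
        ≤ ∑ ℓ' ∈ (univ : Finset ↥(Lf Sn n)).filter (fun ℓ' => τ ℓ' < τ ℓ₂),
          blen Sn n ℓ'.val.val :=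
    Finset.sum_le_sum_of_subset hsub
  rw [h1] at h2
  rw [startv, startv]
  omega

noncomputable def psiFun (τ : ↥(Lf Sn n) ≃ Fin (Lf Sn n).card) : Fin n → Fin n :=
  fun p => ⟨startv Sn τ (ldrF Sn p) + (p.val - ldr Sn p.val), by
    have h1 := off_lt_blen (Sn := Sn) (n := n) p.isLt
    have h2 := startv_add_le τ (ldrF Sn p)
    have h3 : blen Sn n ((ldrF Sn p).val.val) = blen Sn n (ldr Sn p.val) := rfl
    omega⟩

lemma psiFun_inj (τ : ↥(Lf Sn n) ≃ Fin (Lf Sn n).card) : Function.Injective (psiFun τ) := by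
  intro p q h
  have hv : startv Sn τ (ldrF Sn p) + (p.val - ldr Sn p.val)
      = startv Sn τ (ldrF Sn q) + (q.val - ldr Sn q.val) := congrArg Fin.val h
  have hop := off_lt_blen (Sn := Sn) (n := n) p.isLt
  have hoq := off_lt_blen (Sn := Sn) (n := n) q.isLt
  rcases lt_trichotomy (τ (ldrF Sn p)) (τ (ldrF Sn q)) with hlt | heq | hgt
  · have := startv_mono τ hlt
    have h3 : blen Sn n ((ldrF Sn p).val.val) = blen Sn n (ldr Sn p.val) := rfl
    omega
  · have heq2 : ldrF Sn p = ldrF Sn q := τ.injective heq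
    have heq3 : ldr Sn p.val = ldr Sn q.val := by
      rw [← ldrF_val (Sn := Sn) p, ← ldrF_val (Sn := Sn) q, heq2]
    rw [heq2] at hv
    have hp := ldr_le (Sn := Sn) p.val
    have hq := ldr_le (Sn := Sn) q.val
    exact Fin.ext (by omega)
  · have := startv_mono τ hgt
    have h3 : blen Sn n ((ldrF Sn q).val.val) = blen Sn n (ldr Sn q.val) := rfl
    omega

noncomputable def psiPerm (τ : ↥(Lf Sn n) ≃ Fin (Lf Sn n).card) : Equiv.Perm (Fin n) :=
  Equiv.ofBijective (psiFun τ) (Finite.injective_iff_bijective.mp (psiFun_inj τ))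

lemma psiPerm_val (τ : ↥(Lf Sn n) ≃ Fin (Lf Sn n).card) (p : Fin n) :
    (psiPerm τ p).val = startv Sn τ (ldrF Sn p) + (p.val - ldr Sn p.val) := rfl

lemma psi_caprop (τ : ↥(Lf Sn n) ≃ Fin (Lf Sn n).card) : CAprop Sn (psiPerm τ) := by
  intro q hq h1 h2
  rw [psiPerm_val, psiPerm_val]
  have hm : ldr Sn (q+1) = ldr Sn q := ldr_mem hq
  have hF : ldrF Sn (⟨q+1, h1⟩ : Fin n) = ldrF Sn (⟨q, h2⟩ : Fin n) :=
    Subtype.ext (Fin.ext hm)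
  rw [hF]
  have hle := ldr_le (Sn := Sn) q
  have hgoal : startv Sn τ (ldrF Sn (⟨q, h2⟩ : Fin n)) + ((q+1) - ldr Sn (q+1))
      = startv Sn τ (ldrF Sn (⟨q, h2⟩ : Fin n)) + (q - ldr Sn q) + 1 := by
    rw [hm]
    omega
  exact hgoal

lemma psi_at_leader (τ : ↥(Lf Sn n) ≃ Fin (Lf Sn n).card) (ℓ : ↥(Lf Sn n)) :
    (psiPerm τ ℓ.val).val = startv Sn τ ℓ := by
  rw [psiPerm_val, ldrF_self]
  have h := ldrF_leader ℓ
  omega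

theorem ca_equiv :
    Nonempty ({π : Equiv.Perm (Fin n) // CAprop Sn π}
      ≃ (↥(Lf Sn n) ≃ Fin (Lf Sn n).card)) := by
  classical
  set m := (Lf Sn n).card with hm
  let Theta : (↥(Lf Sn n) ≃ Fin m) → {π : Equiv.Perm (Fin n) // CAprop Sn π} :=
    fun τ => ⟨psiPerm τ, psi_caprop τ⟩
  have key : ∀ (τa τb : ↥(Lf Sn n) ≃ Fin m),
      (∀ ℓ, startv Sn τa ℓ = startv Sn τb ℓ) →
      ∀ ℓ ℓ', τa ℓ < τa ℓ' → τb ℓ < τb ℓ' := by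
    intro τa τb hs ℓ ℓ' hlt
    rcases lt_trichotomy (τb ℓ) (τb ℓ') with h | h | h
    · exact h
    · exact absurd (congrArg τa (τb.injective h)) (ne_of_lt hlt)
    · exfalso
      have h1 := startv_mono τa hlt
      have h2 := startv_mono τb h
      have h3 := blen_pos (n := n) (ldrF_leader ℓ) ℓ.val.isLt
      have h4 := blen_pos (n := n) (ldrF_leader ℓ') ℓ'.val.isLt
      have h5 := hs ℓ
      have h6 := hs ℓ'
      omega
  have hinj : Function.Injective Theta := by
    intro τ₁ τ₂ h
    have hE : psiPerm τ₁ = psiPerm τ₂ := congrArg Subtype.val h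
    have hstart : ∀ ℓ, startv Sn τ₁ ℓ = startv Sn τ₂ ℓ := by
      intro ℓ
      have h1 := DFunLike.congr_fun hE ℓ.val
      have h2 := psi_at_leader τ₁ ℓ
      have h3 := psi_at_leader τ₂ ℓ
      have h4 := congrArg Fin.val h1
      omega
    let g : Fin m ≃ Fin m := τ₁.symm.trans τ₂
    have hgmono : StrictMono g := by
      intro i j hij
      have := key τ₁ τ₂ hstart (τ₁.symm i) (τ₁.symm j)
        (by rw [Equiv.apply_symm_apply, Equiv.apply_symm_apply]; exact hij)
      exact this
    have hgid : (g : Fin m → Fin m) = id := by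
      haveI hwf : WellFoundedLT (Fin m) := inferInstance
      exact @Set.range_injOn_strictMono (Fin m) (Fin m) _ _ hwf
        (⇑g) hgmono id (strictMono_id (α := Fin m))
        (by rw [g.surjective.range_eq, Set.range_id])
    ext ℓ
    have := congrFun hgid (τ₁ ℓ)
    simp only [g, Equiv.trans_apply, Equiv.symm_apply_apply, id] at this
    exact congrArg Fin.val this.symm
  have hsurj : Function.Surjective Theta := by
    rintro ⟨π, hπ⟩
    let K : Finset (Fin n) := (Lf Sn n).image (fun p => π p)
    have hK : K.card = m := by
      rw [hm]
      exact Finset.card_image_of_injective _ π.injective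
    let f1 : ↥(Lf Sn n) → ↥K := fun ℓ => ⟨π ℓ.val, Finset.mem_image_of_mem _ ℓ.prop⟩
    have hf1 : Function.Bijective f1 := by
      rw [Fintype.bijective_iff_injective_and_card]
      constructor
      · intro a b hab
        exact Subtype.ext (π.injective (congrArg Subtype.val hab))
      · rw [Fintype.card_coe, Fintype.card_coe, hK]
    let e1 : ↥(Lf Sn n) ≃ ↥K := Equiv.ofBijective f1 hf1
    let oi := K.orderIsoOfFin hK
    let τ : ↥(Lf Sn n) ≃ Fin m := e1.trans oi.symm.toEquiv
    have horder : ∀ ℓ' ℓ : ↥(Lf Sn n), τ ℓ' < τ ℓ ↔ (π ℓ'.val).val < (π ℓ.val).val := by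
      intro ℓ' ℓ
      have h1 : τ ℓ' < τ ℓ ↔ e1 ℓ' < e1 ℓ := by
        constructor
        · intro h
          have := oi.symm.lt_iff_lt.mp h
          exact this
        · intro h
          exact oi.symm.lt_iff_lt.mpr h
      rw [h1]
      change (⟨π ℓ'.val, _⟩ : ↥K) < ⟨π ℓ.val, _⟩ ↔ _
      rw [Subtype.mk_lt_mk]
      exact Fin.lt_def
    refine ⟨τ, ?_⟩
    apply Subtype.ext
    apply Equiv.ext
    intro p
    apply Fin.ext
    rw [psiPerm_val]
    have hca := ca_val hπ p.val p.isLt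
    have hstart : startv Sn τ (ldrF Sn p) = (π (ldrF Sn p).val).val := by
      rw [startv]
      have hfc : (univ : Finset ↥(Lf Sn n)).filter (fun ℓ' => τ ℓ' < τ (ldrF Sn p))
          = (univ : Finset ↥(Lf Sn n)).filter
            (fun ℓ' => (π ℓ'.val).val < (π (ldrF Sn p).val).val) :=
        Finset.filter_congr (fun x _ => by rw [horder])
      rw [hfc]
      exact (ca_count hπ (ldrF Sn p)).symm
    rw [hstart]
    exact hca.symm
  exact ⟨(Equiv.ofBijective Theta ⟨hinj, hsurj⟩).symm⟩

/-- the skew-derangement-side constraint attached to `Sn`. -/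
def CBprop (Sn : Finset ℕ) {n : ℕ} (H : Equiv.Perm (Fin n)) : Prop :=
  ∀ q ∈ Sn, ∀ (_ : q+1 < n) (h2 : q < n), (H ⟨q, h2⟩).val = q + 1

noncomputable def C1 (Sn : Finset ℕ) (n : ℕ) : Finset (Fin n) :=
  univ.filter (fun p => p.val ∉ Sn)

noncomputable def C2 (Sn : Finset ℕ) (n : ℕ) : Finset (Fin n) :=
  univ.filter (fun p => ¬ ∃ q ∈ Sn, q + 1 = p.val)

lemma mem_C1 {x : Fin n} : x ∈ C1 Sn n ↔ x.val ∉ Sn := by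
  simp [C1]

lemma mem_C2 {x : Fin n} : x ∈ C2 Sn n ↔ ¬ ∃ q ∈ Sn, q + 1 = x.val := by
  simp only [C2, Finset.mem_filter, Finset.mem_univ, true_and]

lemma Lf_eq_C2 : Lf Sn n = C2 Sn n := by
  ext p
  simp only [Lf, Finset.mem_filter, Finset.mem_univ, true_and]
  rw [mem_C2, ldr_eq_self_iff]
  push_neg
  rfl

lemma card_C1 (hSn : ∀ q ∈ Sn, q + 1 < n) : (C1 Sn n).card = n - Sn.card := by
  have h1 : (univ : Finset (Fin n)).filter (fun p => p.val ∈ Sn) = univ \ C1 Sn n := by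
    ext p
    simp [C1]
  have h2 : ((univ : Finset (Fin n)).filter (fun p => p.val ∈ Sn)).card = Sn.card := by
    apply Finset.card_bij (fun (p : Fin n) _ => p.val)
    · intro p hp
      rw [Finset.mem_filter] at hp
      exact hp.2
    · intro p1 h1 p2 h2 h
      exact Fin.ext h
    · intro q hq
      exact ⟨⟨q, by have := hSn q hq; omega⟩,
        Finset.mem_filter.mpr ⟨Finset.mem_univ _, hq⟩, rfl⟩
  rw [h1, Finset.card_sdiff_of_subset (Finset.subset_univ _), Finset.card_univ, Fintype.card_fin] at h2
  have h3 : (C1 Sn n).card ≤ n := by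
    have := Finset.card_le_card (Finset.subset_univ (C1 Sn n))
    rwa [Finset.card_univ, Fintype.card_fin] at this
  omega

lemma card_C2 (hSn : ∀ q ∈ Sn, q + 1 < n) : (C2 Sn n).card = n - Sn.card := by
  have h1 : (univ : Finset (Fin n)).filter (fun p => ∃ q ∈ Sn, q + 1 = p.val)
      = univ \ C2 Sn n := by
    ext p
    simp [C2]
  have h2 : ((univ : Finset (Fin n)).filter (fun p => ∃ q ∈ Sn, q + 1 = p.val)).card
      = Sn.card := by
    refine Finset.card_bij' (fun (p : Fin n) _ => p.val - 1)
      (fun q hq => (⟨q + 1, hSn q hq⟩ : Fin n)) ?_ ?_ ?_ ?_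
    · intro p hp
      rw [Finset.mem_filter] at hp
      obtain ⟨q, hq, hqe⟩ := hp.2
      have heq : p.val - 1 = q := by omega
      show p.val - 1 ∈ Sn
      rwa [heq]
    · intro q hq
      exact Finset.mem_filter.mpr ⟨Finset.mem_univ _, ⟨q, hq, rfl⟩⟩
    · intro p hp
      rw [Finset.mem_filter] at hp
      obtain ⟨q, hq, hqe⟩ := hp.2
      exact Fin.ext (by simp; omega)
    · intro q hq
      simp
  rw [h1, Finset.card_sdiff_of_subset (Finset.subset_univ _), Finset.card_univ, Fintype.card_fin] at h2
  have h3 : (C2 Sn n).card ≤ n := by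
    have := Finset.card_le_card (Finset.subset_univ (C2 Sn n))
    rwa [Finset.card_univ, Fintype.card_fin] at this
  omega

/-- the function underlying the inverse bijection for the `B`-side count. -/
noncomputable def Ffun (Sn : Finset ℕ) {n : ℕ} (hSn : ∀ q ∈ Sn, q + 1 < n)
    (e : ↥(C1 Sn n) ≃ ↥(C2 Sn n)) (x : Fin n) : Fin n :=
  if h : x.val ∈ Sn then ⟨x.val + 1, hSn _ h⟩
  else (e ⟨x, mem_C1.mpr h⟩).val

lemma Ffun_pos (hSn : ∀ q ∈ Sn, q + 1 < n) (e : ↥(C1 Sn n) ≃ ↥(C2 Sn n))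
    {x : Fin n} (h : x.val ∈ Sn) : Ffun Sn hSn e x = ⟨x.val + 1, hSn _ h⟩ := by
  rw [Ffun, dif_pos h]

lemma Ffun_neg (hSn : ∀ q ∈ Sn, q + 1 < n) (e : ↥(C1 Sn n) ≃ ↥(C2 Sn n))
    {x : Fin n} (h : x.val ∉ Sn) : Ffun Sn hSn e x = (e ⟨x, mem_C1.mpr h⟩).val := by
  rw [Ffun, dif_neg h]

theorem cb_equiv (hSn : ∀ q ∈ Sn, q + 1 < n) :
    Nonempty ({H : Equiv.Perm (Fin n) // CBprop Sn H} ≃ (↥(C1 Sn n) ≃ ↥(C2 Sn n))) := by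
  classical
  have hFinj : ∀ e, Function.Injective (Ffun Sn hSn e) := by
    intro e x y h
    by_cases hx : x.val ∈ Sn <;> by_cases hy : y.val ∈ Sn
    · rw [Ffun_pos hSn e hx, Ffun_pos hSn e hy] at h
      rw [Fin.mk.injEq] at h
      exact Fin.ext (by omega)
    · exfalso
      rw [Ffun_pos hSn e hx, Ffun_neg hSn e hy] at h
      have hm := (e ⟨y, mem_C1.mpr hy⟩).prop
      rw [mem_C2] at hm
      exact hm ⟨x.val, hx, by rw [← h]⟩
    · exfalso
      rw [Ffun_neg hSn e hx, Ffun_pos hSn e hy] at h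
      have hm := (e ⟨x, mem_C1.mpr hx⟩).prop
      rw [mem_C2] at hm
      exact hm ⟨y.val, hy, by rw [h]⟩
    · rw [Ffun_neg hSn e hx, Ffun_neg hSn e hy] at h
      have := e.injective (Subtype.ext h)
      exact congrArg Subtype.val this
  let Xi : (↥(C1 Sn n) ≃ ↥(C2 Sn n)) → {H : Equiv.Perm (Fin n) // CBprop Sn H} :=
    fun e => ⟨Equiv.ofBijective (Ffun Sn hSn e) (Finite.injective_iff_bijective.mp (hFinj e)), by
      intro q hq h1 h2
      show (Ffun Sn hSn e ⟨q, h2⟩).val = q + 1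
      rw [Ffun_pos hSn e hq]⟩
  have hXinj : Function.Injective Xi := by
    intro e₁ e₂ h
    have hE : ∀ x : Fin n, Ffun Sn hSn e₁ x = Ffun Sn hSn e₂ x := by
      intro x
      have h2 := congrArg Subtype.val h
      exact DFunLike.congr_fun h2 x
    apply Equiv.ext
    intro x
    have hx : (x.val : Fin n).val ∉ Sn := mem_C1.mp x.prop
    have h1 := hE x.val
    rw [Ffun_neg hSn e₁ hx, Ffun_neg hSn e₂ hx] at h1
    apply Subtype.ext
    have hc1 : (⟨x.val, mem_C1.mpr hx⟩ : ↥(C1 Sn n)) = x := Subtype.ext rfl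
    rw [hc1] at h1
    exact h1
  have hXsurj : Function.Surjective Xi := by
    rintro ⟨H, hH⟩
    have hmape : ∀ x : ↥(C1 Sn n), H x.val ∈ C2 Sn n := by
      intro x
      rw [mem_C2]
      rintro ⟨q, hq, hqe⟩
      have hq2 : q < n := by have := hSn q hq; omega
      have h1 : (H ⟨q, hq2⟩).val = q + 1 := hH q hq (hSn q hq) hq2
      have h2 : H ⟨q, hq2⟩ = H x.val := Fin.ext (by omega)
      have h3 := H.injective h2
      have hx := mem_C1.mp x.prop
      apply hx
      rw [← h3]
      exact hq
    let efun : ↥(C1 Sn n) → ↥(C2 Sn n) := fun x => ⟨H x.val, hmape x⟩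
    have hebij : Function.Bijective efun := by
      rw [Fintype.bijective_iff_injective_and_card]
      constructor
      · intro a b hab
        exact Subtype.ext (H.injective (congrArg Subtype.val hab))
      · rw [Fintype.card_coe, Fintype.card_coe, card_C1 hSn, card_C2 hSn]
    refine ⟨Equiv.ofBijective efun hebij, ?_⟩
    apply Subtype.ext
    apply Equiv.ext
    intro x
    show Ffun Sn hSn (Equiv.ofBijective efun hebij) x = H x
    by_cases hx : x.val ∈ Sn
    · rw [Ffun_pos hSn _ hx]
      have hx2 : x.val < n := x.isLt
      have h1 := hH x.val hx (hSn _ hx) hx2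
      have hxeta : (⟨x.val, hx2⟩ : Fin n) = x := Fin.ext rfl
      rw [hxeta] at h1
      apply Fin.ext
      show x.val + 1 = (H x).val
      omega
    · rw [Ffun_neg hSn _ hx]
      rfl
  exact ⟨(Equiv.ofBijective Xi ⟨hXinj, hXsurj⟩).symm⟩

lemma inclusion_exclusion {X ι : Type*} [Fintype X] [DecidableEq ι]
    (U : Finset ι) (bad : X → Finset ι) (hb : ∀ x, bad x ⊆ U) :
    (((univ : Finset X).filter (fun x => bad x = ∅)).card : ℤ)
      = ∑ S ∈ U.powerset,
          (-1 : ℤ)^S.card * (((univ : Finset X).filter (fun x => S ⊆ bad x)).card : ℤ) := by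
  classical
  have key : ∀ x : X, ∑ S ∈ U.powerset, (if S ⊆ bad x then ((-1 : ℤ)^S.card) else 0)
      = if bad x = ∅ then 1 else 0 := by
    intro x
    rw [← Finset.sum_filter]
    have hfp : U.powerset.filter (fun S => S ⊆ bad x) = (bad x).powerset := by
      ext S
      simp only [Finset.mem_filter, Finset.mem_powerset]
      constructor
      · exact fun h => h.2
      · exact fun h => ⟨h.trans (hb x), h⟩
    rw [hfp]
    exact Finset.sum_powerset_neg_one_pow_card
  have h1 : (((univ : Finset X).filter (fun x => bad x = ∅)).card : ℤ)
      = ∑ x ∈ (univ : Finset X), if bad x = ∅ then (1:ℤ) else 0 := by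
    rw [Finset.sum_boole]
  rw [h1]
  rw [Finset.sum_congr rfl (fun x _ => (key x).symm)]
  rw [Finset.sum_comm]
  apply Finset.sum_congr rfl
  intro S hS
  rw [← Finset.sum_filter, Finset.sum_const, nsmul_eq_mul]
  ring

def nxt' {n : ℕ} (i : Fin n) : Fin n := if h : i.val + 1 < n then ⟨i.val + 1, h⟩ else i

def badA {n : ℕ} (π : Equiv.Perm (Fin n)) : Finset (Fin n) :=
  univ.filter (fun i => i.val + 1 < n ∧ (π (nxt' i)).val = (π i).val + 1)

def badB {n : ℕ} (H : Equiv.Perm (Fin n)) : Finset (Fin n) :=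
  univ.filter (fun i => i.val + 1 < n ∧ (H i).val = i.val + 1)

def Uset (n : ℕ) : Finset (Fin n) := univ.filter (fun i => i.val + 1 < n)

lemma badA_subset {n : ℕ} (π : Equiv.Perm (Fin n)) : badA π ⊆ Uset n := by
  intro i hi
  rw [badA, Finset.mem_filter] at hi
  rw [Uset, Finset.mem_filter]
  exact ⟨hi.1, hi.2.1⟩

lemma badB_subset {n : ℕ} (H : Equiv.Perm (Fin n)) : badB H ⊆ Uset n := by
  intro i hi
  rw [badB, Finset.mem_filter] at hi
  rw [Uset, Finset.mem_filter]
  exact ⟨hi.1, hi.2.1⟩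

lemma nxt'_eq {n : ℕ} (i : Fin n) (h : i.val + 1 < n) : nxt' i = ⟨i.val + 1, h⟩ := by
  rw [nxt', dif_pos h]

lemma perS {n : ℕ} (S : Finset (Fin n)) (hS : S ⊆ Uset n) :
    ((univ : Finset (Equiv.Perm (Fin n))).filter (fun π => S ⊆ badA π)).card
      = ((univ : Finset (Equiv.Perm (Fin n))).filter (fun H => S ⊆ badB H)).card := by
  classical
  set Sn := S.image Fin.val with hSndef
  have hSn : ∀ q ∈ Sn, q + 1 < n := by
    intro q hq
    rw [hSndef, Finset.mem_image] at hq
    obtain ⟨i, hi, rfl⟩ := hq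
    have := hS hi
    rw [Uset, Finset.mem_filter] at this
    exact this.2
  have hA : ∀ π : Equiv.Perm (Fin n), (S ⊆ badA π ↔ CAprop Sn π) := by
    intro π
    constructor
    · intro h q hq h1 h2
      rw [hSndef, Finset.mem_image] at hq
      obtain ⟨i, hi, rfl⟩ := hq
      have hmem := h hi
      rw [badA, Finset.mem_filter] at hmem
      obtain ⟨-, h1', heq⟩ := hmem
      rw [nxt'_eq i h1'] at heq
      have hi1 : (⟨i.val + 1, h1⟩ : Fin n) = ⟨i.val + 1, h1'⟩ := rfl
      have hi2 : (⟨i.val, h2⟩ : Fin n) = i := Fin.ext rfl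
      rw [hi1, hi2]
      exact heq
    · intro h i hi
      have hq : i.val ∈ Sn := by
        rw [hSndef, Finset.mem_image]
        exact ⟨i, hi, rfl⟩
      have h1 : i.val + 1 < n := hSn _ hq
      have := h i.val hq h1 i.isLt
      rw [badA, Finset.mem_filter]
      refine ⟨Finset.mem_univ _, h1, ?_⟩
      rw [nxt'_eq i h1]
      have hi2 : (⟨i.val, i.isLt⟩ : Fin n) = i := Fin.ext rfl
      rw [hi2] at this
      exact this
  have hB : ∀ H : Equiv.Perm (Fin n), (S ⊆ badB H ↔ CBprop Sn H) := by
    intro H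
    constructor
    · intro h q hq h1 h2
      rw [hSndef, Finset.mem_image] at hq
      obtain ⟨i, hi, rfl⟩ := hq
      have hmem := h hi
      rw [badB, Finset.mem_filter] at hmem
      have hi2 : (⟨i.val, h2⟩ : Fin n) = i := Fin.ext rfl
      rw [hi2]
      exact hmem.2.2
    · intro h i hi
      have hq : i.val ∈ Sn := by
        rw [hSndef, Finset.mem_image]
        exact ⟨i, hi, rfl⟩
      have h1 : i.val + 1 < n := hSn _ hq
      have := h i.val hq h1 i.isLt
      rw [badB, Finset.mem_filter]
      have hi2 : (⟨i.val, i.isLt⟩ : Fin n) = i := Fin.ext rfl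
      rw [hi2] at this
      exact ⟨Finset.mem_univ _, h1, this⟩
  obtain ⟨eA⟩ := ca_equiv (Sn := Sn) (n := n)
  obtain ⟨eB⟩ := cb_equiv (Sn := Sn) (n := n) hSn
  have hLC2 : (Lf Sn n).card = (C2 Sn n).card := by rw [Lf_eq_C2]
  have e1 : ↥(Lf Sn n) ≃ ↥(C1 Sn n) := Fintype.equivOfCardEq (by
    rw [Fintype.card_coe, Fintype.card_coe, hLC2, card_C1 hSn, card_C2 hSn])
  have e2 : Fin ((Lf Sn n).card) ≃ ↥(C2 Sn n) := Fintype.equivOfCardEq (by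
    rw [Fintype.card_fin, Fintype.card_coe, hLC2])
  calc ((univ : Finset (Equiv.Perm (Fin n))).filter (fun π => S ⊆ badA π)).card
      = Fintype.card {π : Equiv.Perm (Fin n) // S ⊆ badA π} := (Fintype.card_subtype _).symm
    _ = Fintype.card {π : Equiv.Perm (Fin n) // CAprop Sn π} :=
        Fintype.card_congr (Equiv.subtypeEquivRight hA)
    _ = Fintype.card (↥(Lf Sn n) ≃ Fin ((Lf Sn n).card)) := Fintype.card_congr eA
    _ = Fintype.card (↥(C1 Sn n) ≃ ↥(C2 Sn n)) := Fintype.card_congr (Equiv.equivCongr e1 e2)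
    _ = Fintype.card {H : Equiv.Perm (Fin n) // CBprop Sn H} := (Fintype.card_congr eB).symm
    _ = Fintype.card {H : Equiv.Perm (Fin n) // S ⊆ badB H} :=
        Fintype.card_congr (Equiv.subtypeEquivRight (fun H => (hB H).symm))
    _ = ((univ : Finset (Equiv.Perm (Fin n))).filter (fun H => S ⊆ badB H)).card :=
        Fintype.card_subtype _

theorem main_card (n : ℕ) :
    ((univ : Finset (Equiv.Perm (Fin n))).filter (fun π => badA π = ∅)).card
      = ((univ : Finset (Equiv.Perm (Fin n))).filter (fun H => badB H = ∅)).card := by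
  classical
  have hA := inclusion_exclusion (Uset n) (badA (n := n)) badA_subset
  have hB := inclusion_exclusion (Uset n) (badB (n := n)) badB_subset
  have hz : (((univ : Finset (Equiv.Perm (Fin n))).filter (fun π => badA π = ∅)).card : ℤ)
      = (((univ : Finset (Equiv.Perm (Fin n))).filter (fun H => badB H = ∅)).card : ℤ) := by
    rw [hA, hB]
    apply Finset.sum_congr rfl
    intro S hS
    rw [Finset.mem_powerset] at hS
    rw [perS S hS]
  exact_mod_cast hz


lemma condA_iff (π : Equiv.Perm (Fin n)) :
    (∀ i j : Fin n, j.val = i.val + 1 → (π j).val ≠ (π i).val + 1) ↔ badA π = ∅ := by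
  constructor
  · intro h
    rw [Finset.eq_empty_iff_forall_notMem]
    intro i hi
    rw [badA, Finset.mem_filter] at hi
    obtain ⟨-, h1, heq⟩ := hi
    exact h i (nxt' i) (by rw [nxt'_eq i h1]) heq
  · intro h i j hji
    intro heq
    have h1 : i.val + 1 < n := by
      have := j.isLt
      omega
    have hj : nxt' i = j := by
      rw [nxt'_eq i h1]
      exact Fin.ext hji.symm
    have : i ∈ badA π := by
      rw [badA, Finset.mem_filter]
      exact ⟨Finset.mem_univ _, h1, by rw [hj]; exact heq⟩
    rw [h] at this
    exact absurd this (Finset.notMem_empty i)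

lemma condB_iff (H : Equiv.Perm (Fin n)) :
    (∀ j : Fin n, (H j).val ≠ j.val + 1) ↔ badB H = ∅ := by
  constructor
  · intro h
    rw [Finset.eq_empty_iff_forall_notMem]
    intro i hi
    rw [badB, Finset.mem_filter] at hi
    exact h i hi.2.2
  · intro h j
    intro heq
    have h1 : j.val + 1 < n := by
      have := (H j).isLt
      omega
    have : j ∈ badB H := by
      rw [badB, Finset.mem_filter]
      exact ⟨Finset.mem_univ _, h1, heq⟩
    rw [h] at this
    exact absurd this (Finset.notMem_empty j)

noncomputable def funEquiv (n : ℕ) :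
    {f : Fin n → Fin n //
        Function.Bijective f ∧ ∀ j : Fin n, (f j).val ≠ j.val + 1}
      ≃ {H : Equiv.Perm (Fin n) // ∀ j : Fin n, (H j).val ≠ j.val + 1} where
  toFun := fun x => ⟨Equiv.ofBijective x.val x.prop.1, x.prop.2⟩
  invFun := fun x => ⟨(x.val : Fin n → Fin n), x.val.bijective, x.prop⟩
  left_inv := fun x => rfl
  right_inv := fun x => Subtype.ext (Equiv.ext fun y => rfl)

theorem final_card (n : ℕ) :
    Fintype.card {π : Equiv.Perm (Fin n) //
        ∀ i j : Fin n, j.val = i.val + 1 → (π j).val ≠ (π i).val + 1} =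
      Fintype.card {f : Fin n → Fin n //
        Function.Bijective f ∧ ∀ j : Fin n, (f j).val ≠ j.val + 1} := by
  classical
  calc Fintype.card {π : Equiv.Perm (Fin n) //
        ∀ i j : Fin n, j.val = i.val + 1 → (π j).val ≠ (π i).val + 1}
      = Fintype.card {π : Equiv.Perm (Fin n) // badA π = ∅} :=
        Fintype.card_congr (Equiv.subtypeEquivRight condA_iff)
    _ = ((univ : Finset (Equiv.Perm (Fin n))).filter (fun π => badA π = ∅)).card :=
        Fintype.card_subtype _
    _ = ((univ : Finset (Equiv.Perm (Fin n))).filter (fun H => badB H = ∅)).card :=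
        main_card n
    _ = Fintype.card {H : Equiv.Perm (Fin n) // badB H = ∅} :=
        (Fintype.card_subtype _).symm
    _ = Fintype.card {H : Equiv.Perm (Fin n) // ∀ j : Fin n, (H j).val ≠ j.val + 1} :=
        Fintype.card_congr (Equiv.subtypeEquivRight (fun H => (condB_iff H).symm))
    _ = Fintype.card {f : Fin n → Fin n //
          Function.Bijective f ∧ ∀ j : Fin n, (f j).val ≠ j.val + 1} :=
        (Fintype.card_congr (funEquiv n)).symm

end
end RelSkew

/-- Ordinary relative derangements on [n] (permutations π with
    π_{i+1} ≠ π_i + 1) are in bijection with ordinary skew derangements on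
    [n] (bijections f : [n] → {0,…,n-1} with f(i) ≠ i, encoded on `Fin n`
    with index j ↔ number j+1 and values 0,…,n-1); in particular the two
    sets have the same cardinality. -/
theorem relative_derangement_equiv_skew_unsigned (n : ℕ) :
    Nonempty
      ({π : Equiv.Perm (Fin n) //
          ∀ i j : Fin n, j.val = i.val + 1 → (π j).val ≠ (π i).val + 1} ≃
        {f : Fin n → Fin n //
          Function.Bijective f ∧ ∀ j : Fin n, (f j).val ≠ j.val + 1}) ∧
    Fintype.card {π : Equiv.Perm (Fin n) //
        ∀ i j : Fin n, j.val = i.val + 1 → (π j).val ≠ (π i).val + 1} =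
      Fintype.card {f : Fin n → Fin n //
        Function.Bijective f ∧ ∀ j : Fin n, (f j).val ≠ j.val + 1} := by
  have h := RelSkew.final_card n
  exact ⟨⟨Fintype.equivOfCardEq h⟩, h⟩
end

section
/- The number of skew derangements on [n] (bijections f: [n] → {0,...,n-1} with f(i) ≠ i for all i) equals D_n + D_{n-1}, where D_n is the number of derangements of [n] and D_0 = 1. -/
open Equiv Function


/-- The number of skew derangements on [n] (bijections f : [n] → {0,…,n-1}
    with f(i) ≠ i for all i, encoded on `Fin n` with index j ↔ number j+1
    and values 0,…,n-1) equals D_n + D_{n-1} (with D_0 = 1, automatic for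
    the empty type). -/
theorem skew_derangement_count (n : ℕ) (hn : 1 ≤ n) :
    Fintype.card {f : Fin n → Fin n //
        Function.Bijective f ∧ ∀ j : Fin n, (f j).val ≠ j.val + 1} =
      Fintype.card {σ : Equiv.Perm (Fin n) // ∀ i, σ i ≠ i} +
      Fintype.card {σ : Equiv.Perm (Fin (n - 1)) // ∀ i, σ i ≠ i} := by
  obtain ⟨m, rfl⟩ : ∃ m, n = m + 1 := ⟨n - 1, (Nat.succ_pred_eq_of_pos hn).symm⟩
  simp only [Nat.succ_sub_one]
  set c : Perm (Fin (m + 1)) := finRotate (m + 1) with hc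
  -- Step 1: functions-with-bijectivity ≃ permutations
  have e1 : {f : Fin (m+1) → Fin (m+1) //
      Function.Bijective f ∧ ∀ j : Fin (m+1), (f j).val ≠ j.val + 1} ≃
      {σ : Perm (Fin (m+1)) // ∀ j : Fin (m+1), (σ j).val ≠ j.val + 1} :=
    { toFun := fun ⟨f, hb, hp⟩ => ⟨Equiv.ofBijective f hb, hp⟩
      invFun := fun ⟨σ, hp⟩ => ⟨σ, σ.bijective, hp⟩
      left_inv := fun ⟨f, hb, hp⟩ => rfl
      right_inv := fun ⟨σ, hp⟩ => Subtype.ext (Equiv.ext fun x => rfl) }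
  -- Step 2: multiply by c⁻¹
  have key : ∀ σ : Perm (Fin (m+1)),
      (∀ j : Fin (m+1), (σ j).val ≠ j.val + 1) ↔
      Function.fixedPoints ⇑(c⁻¹ * σ) ⊆ {Fin.last m} := by
    intro σ
    constructor
    · intro h x hx
      simp only [Function.mem_fixedPoints, IsFixedPt, Perm.mul_apply] at hx
      by_contra hne
      have hlt : x < Fin.last m := Fin.lt_last_iff_ne_last.mpr hne
      have : σ x = c x := by
        have := congrArg c hx
        simpa using this
      have : (σ x).val = x.val + 1 := by
        rw [this, hc, finRotate_succ_apply, Fin.val_add_one_of_lt hlt]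
      exact h x this
    · intro h j hj
      have hjlt : j < Fin.last m := by
        have h1 : (σ j).val < m + 1 := (σ j).isLt
        have : j.val < m := by omega
        simpa [Fin.lt_def, Fin.last] using this
      have : σ j = c j := by
        apply Fin.ext
        rw [hj, hc, finRotate_succ_apply, Fin.val_add_one_of_lt hjlt]
      have hfix : j ∈ Function.fixedPoints ⇑(c⁻¹ * σ) := by
        simp [Function.mem_fixedPoints, IsFixedPt, Perm.mul_apply, this]
      have := h hfix
      simp only [Set.mem_singleton_iff] at this
      exact absurd this (Fin.lt_last_iff_ne_last.mp hjlt)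
  have e2 : {σ : Perm (Fin (m+1)) // ∀ j : Fin (m+1), (σ j).val ≠ j.val + 1} ≃
      {f : Perm (Fin (m+1)) // Function.fixedPoints ⇑f ⊆ {Fin.last m}} :=
    (Equiv.mulLeft c⁻¹).subtypeEquiv (fun σ => by simpa using key σ)
  -- Step 3: split
  have e3 := derangements.atMostOneFixedPointEquivSum_derangements (Fin.last m)
  -- Step 4: derangements on the complement ≃ derangements (Fin m)
  have e4 : derangements (({Fin.last m}ᶜ : Set (Fin (m+1))) : Type) ≃
      derangements (Fin m) := by
    refine Equiv.derangementsCongr ?_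
    exact (Equiv.subtypeEquivRight (fun x => by simp)).trans (finSuccAboveEquiv (Fin.last m)).symm
  have e5 : derangements (Fin (m+1)) ≃ {σ : Perm (Fin (m+1)) // ∀ i, σ i ≠ i} :=
    Equiv.subtypeEquivRight (fun σ => Iff.rfl)
  have e6 : derangements (Fin m) ≃ {σ : Perm (Fin m) // ∀ i, σ i ≠ i} :=
    Equiv.subtypeEquivRight (fun σ => Iff.rfl)
  calc Fintype.card {f : Fin (m+1) → Fin (m+1) //
        Function.Bijective f ∧ ∀ j : Fin (m+1), (f j).val ≠ j.val + 1}
      = Fintype.card ((derangements (({Fin.last m}ᶜ : Set (Fin (m+1))) : Type)) ⊕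
          (derangements (Fin (m+1)))) :=
        Fintype.card_congr ((e1.trans e2).trans e3)
    _ = Fintype.card {σ : Perm (Fin (m+1)) // ∀ i, σ i ≠ i} +
        Fintype.card {σ : Perm (Fin m) // ∀ i, σ i ≠ i} := by
        rw [Fintype.card_sum, Fintype.card_congr (e4.trans e6),
          Fintype.card_congr e5, Nat.add_comm]
end

section
/- For n ≥ 1, the number of relative derangements Q_n on [n] satisfies Q_n = Σ_{k=0}^{n-1} (-1)^k · C(n-1, k) · (n-k)!. -/
open Finset

namespace RelDer

theorem rank_perm (m : ℕ) (σ : Equiv.Perm (Fin m)) (a : Fin m) :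
    (Finset.univ.filter (fun b => σ b < σ a)).card = ((σ a) :ℕ) := by
  have h1 : (Finset.univ.filter (fun b => σ b < σ a)).image σ
      = Finset.univ.filter (fun b => b < σ a) := by
    ext b
    simp only [mem_image, mem_filter, mem_univ, true_and]
    constructor
    · rintro ⟨c, hc, rfl⟩; exact hc
    · intro hb; exact ⟨σ.symm b, by simpa using hb, by simp⟩
  rw [← Finset.card_image_of_injective _ σ.injective, h1,
    show Finset.univ.filter (fun b => b < σ a) = Finset.Iio (σ a) by ext b; simp, Fin.card_Iio]

variable {N m : ℕ}

/-- starts: positions that are not of the form `i.succ` for `i ∈ T`. -/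
def S (T : Finset (Fin N)) : Finset (Fin (N+1)) := (T.image Fin.succ)ᶜ

lemma zero_mem_S (T : Finset (Fin N)) : (0 : Fin (N+1)) ∈ S T := by
  simp only [S, mem_compl, mem_image]
  rintro ⟨i, -, h⟩
  exact (Fin.succ_ne_zero i) h

lemma card_S (T : Finset (Fin N)) : (S T).card = N + 1 - T.card := by
  rw [S, card_compl, card_image_of_injective _ (Fin.succ_injective N), Fintype.card_fin]

lemma not_mem_S {T : Finset (Fin N)} {p : Fin (N+1)} (hp : p ∉ S T) :
    ∃ i ∈ T, i.succ = p := by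
  simpa [S, mem_compl] using hp

section

variable (T : Finset (Fin N)) (hm : (S T).card = m)

/-- the enumeration of starts -/
def f : Fin m ↪o Fin (N+1) := (S T).orderEmbOfFin hm

include T hm in
lemma hm1 : 0 < m := hm ▸ card_pos.2 ⟨0, zero_mem_S T⟩

lemma f_zero : f T hm ⟨0, hm1 T hm⟩ = 0 := by
  apply le_antisymm _ (Fin.zero_le _)
  unfold f
  rw [Finset.orderEmbOfFin_zero hm (hm1 T hm)]
  exact Finset.min'_le _ _ (zero_mem_S T)

/-- index of the block containing `p` : the largest `a` with `f a ≤ p` -/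
def idx (p : Fin (N+1)) : Fin m :=
  ((univ.filter (fun a => f T hm a ≤ p)).max'
    ⟨⟨0, hm1 T hm⟩, by simp [f_zero T hm, Fin.zero_le]⟩)

lemma f_idx_le (p : Fin (N+1)) : f T hm (idx T hm p) ≤ p := by
  have := Finset.max'_mem (univ.filter (fun a => f T hm a ≤ p))
    ⟨⟨0, hm1 T hm⟩, by simp [f_zero T hm, Fin.zero_le]⟩
  simpa [idx] using this

lemma le_idx {p : Fin (N+1)} {a : Fin m} (h : f T hm a ≤ p) : a ≤ idx T hm p :=
  Finset.le_max' _ _ (by simpa using h)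

lemma lt_of_idx_lt {p : Fin (N+1)} {b : Fin m} (h : idx T hm p < b) : p < f T hm b := by
  by_contra hc
  exact absurd (le_idx T hm (not_lt.mp hc)) (not_le.mpr h)

lemma idx_f (a : Fin m) : idx T hm (f T hm a) = a := by
  refine le_antisymm ?_ (le_idx T hm le_rfl)
  by_contra hc
  push_neg at hc
  exact absurd (f_idx_le T hm (f T hm a)) (not_le.mpr ((f T hm).strictMono hc))

/-- one past the end of block `a`, as a natural number -/
def nxt (a : Fin m) : ℕ :=
  if h : (a : ℕ) + 1 < m then (f T hm ⟨(a:ℕ)+1, h⟩ : ℕ) else N + 1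

/-- length of block `a` -/
def len (a : Fin m) : ℕ := nxt T hm a - (f T hm a : ℕ)

lemma lt_nxt_idx (p : Fin (N+1)) : (p : ℕ) < nxt T hm (idx T hm p) := by
  unfold nxt
  split
  · next h =>
    have : idx T hm p < (⟨(idx T hm p : ℕ)+1, h⟩ : Fin m) := by simp [Fin.lt_def]
    exact_mod_cast lt_of_idx_lt T hm this
  · exact p.isLt

lemma idx_eq_of (p : Fin (N+1)) (a : Fin m) (h1 : f T hm a ≤ p) (h2 : (p:ℕ) < nxt T hm a) :
    idx T hm p = a := by
  have ha := le_idx T hm h1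
  refine le_antisymm ?_ ha
  by_contra hc
  push_neg at hc
  -- a < idx p, so a+1 ≤ idx p < m, and f (a+1) ≤ f (idx p) ≤ p, contradicting h2
  have hlt : (a:ℕ) + 1 < m := lt_of_le_of_lt (Nat.succ_le_of_lt hc) (idx T hm p).isLt
  have : f T hm ⟨(a:ℕ)+1, hlt⟩ ≤ f T hm (idx T hm p) :=
    (f T hm).monotone (by simpa [Fin.le_def] using Nat.succ_le_of_lt hc)
  have h3 : (f T hm ⟨(a:ℕ)+1, hlt⟩ : ℕ) ≤ (p:ℕ) := le_trans this (f_idx_le T hm p)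
  rw [nxt, dif_pos hlt] at h2
  omega

lemma len_pos (a : Fin m) : 0 < len T hm a := by
  have h1 := lt_nxt_idx T hm (f T hm a)
  rw [idx_f] at h1
  unfold len
  omega

lemma f_add_len_le (a : Fin m) : (f T hm a : ℕ) + len T hm a ≤ N + 1 := by
  unfold len nxt
  split
  · next h => have := (f T hm ⟨(a:ℕ)+1, h⟩).isLt; omega
  · omega

/-- the block of `p`: its index and offset determine p -/
lemma f_idx_add_offset (p : Fin (N+1)) :
    (f T hm (idx T hm p) : ℕ) + ((p:ℕ) - (f T hm (idx T hm p) : ℕ)) = (p : ℕ) := by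
  have := f_idx_le T hm p
  rw [Fin.le_def] at this
  omega

lemma offset_lt_len (p : Fin (N+1)) :
    (p:ℕ) - (f T hm (idx T hm p) : ℕ) < len T hm (idx T hm p) := by
  have h1 := lt_nxt_idx T hm p
  have h2 := f_idx_le T hm p
  rw [Fin.le_def] at h2
  unfold len
  omega

/-- if `p` is a non-start, then it lies in the same block as its predecessor -/
lemma idx_succ {i : Fin N} (hi : i ∈ T) :
    idx T hm i.succ = idx T hm i.castSucc ∧
      (f T hm (idx T hm i.succ) : ℕ) ≤ (i.castSucc : ℕ) := by
  have hns : i.succ ∉ S T := by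
    simp only [S, mem_compl, not_not, mem_image]
    exact ⟨i, hi, rfl⟩
  have hne : f T hm (idx T hm i.succ) ≠ i.succ := by
    intro h
    exact hns (h ▸ Finset.orderEmbOfFin_mem (S T) hm (idx T hm i.succ))
  have hle : f T hm (idx T hm i.succ) ≤ i.succ := f_idx_le T hm i.succ
  have hle' : (f T hm (idx T hm i.succ) : ℕ) ≤ (i.castSucc : ℕ) := by
    rw [Fin.le_def] at hle
    have h3 : (f T hm (idx T hm i.succ) : ℕ) ≠ (i.succ : ℕ) := fun h => hne (Fin.ext h)
    have h4 : (i.succ : ℕ) = (i : ℕ) + 1 := Fin.val_succ i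
    have h5 : (i.castSucc : ℕ) = (i : ℕ) := Fin.coe_castSucc i
    omega
  have h1 : idx T hm i.succ ≤ idx T hm i.castSucc := le_idx T hm (by rw [Fin.le_def]; exact hle')
  have h2 : idx T hm i.castSucc ≤ idx T hm i.succ :=
    le_idx T hm (le_trans (f_idx_le T hm i.castSucc) (le_of_lt (Fin.castSucc_lt_succ : i.castSucc < i.succ)))
  exact ⟨le_antisymm h1 h2, hle'⟩

lemma mem_S_iff {p : Fin (N+1)} : p ∈ S T ↔ ∃ a, f T hm a = p := by
  constructor
  · intro hp
    have := Finset.range_orderEmbOfFin (S T) hm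
    have : p ∈ Set.range ((S T).orderEmbOfFin hm) := by rw [this]; exact_mod_cast hp
    obtain ⟨a, ha⟩ := this
    exact ⟨a, ha⟩
  · rintro ⟨a, rfl⟩
    exact Finset.orderEmbOfFin_mem (S T) hm a

lemma apply_block (π : Equiv.Perm (Fin (N+1)))
    (hπ : ∀ i ∈ T, ((π i.succ : Fin (N+1)) : ℕ) = ((π i.castSucc : Fin (N+1)) : ℕ) + 1)
    (p : Fin (N+1)) :
    ((π p : Fin (N+1)) : ℕ)
      = ((π (f T hm (idx T hm p)) : Fin (N+1)) : ℕ)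
        + ((p:ℕ) - (f T hm (idx T hm p) : ℕ)) := by
  suffices H : ∀ v : ℕ, ∀ p : Fin (N+1), (p:ℕ) = v →
      ((π p : Fin (N+1)) : ℕ)
      = ((π (f T hm (idx T hm p)) : Fin (N+1)) : ℕ)
        + ((p:ℕ) - (f T hm (idx T hm p) : ℕ)) from H (p:ℕ) p rfl
  intro v
  induction v using Nat.strong_induction_on with
  | _ v ih =>
    intro p hpv
    by_cases hp : p ∈ S T
    · obtain ⟨a, rfl⟩ := (mem_S_iff T hm).mp hp
      rw [idx_f]
      simp
    · obtain ⟨i, hi, rfl⟩ := not_mem_S hp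
      have hsv : (i.succ : ℕ) = (i:ℕ) + 1 := Fin.val_succ i
      have hcv : (i.castSucc : ℕ) = (i:ℕ) := Fin.coe_castSucc i
      obtain ⟨hidx, hle⟩ := idx_succ T hm hi
      have hIH := ih (i:ℕ) (by omega) i.castSucc hcv
      have hcons := hπ i hi
      rw [hidx] at hle ⊢
      rw [hcons, hIH]
      omega

lemma card_block (a : Fin m) :
    (univ.filter (fun p : Fin (N+1) => idx T hm p = a)).card = len T hm a := by
  have hfl := f_add_len_le T hm a
  have hnxt : (f T hm a : ℕ) + len T hm a = nxt T hm a := by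
    have h1 := lt_nxt_idx T hm (f T hm a)
    rw [idx_f] at h1
    unfold len
    omega
  rw [← Finset.card_range (len T hm a)]
  refine Finset.card_bij'
    (i := fun p _ => (p:ℕ) - (f T hm a : ℕ))
    (j := fun t ht => (⟨(f T hm a : ℕ) + t, by
      rw [mem_range] at ht; omega⟩ : Fin (N+1))) ?_ ?_ ?_ ?_
  · intro p hp
    rw [mem_filter] at hp
    obtain ⟨-, rfl⟩ := hp
    exact mem_range.mpr (offset_lt_len T hm p)
  · intro t ht
    rw [mem_range] at ht
    rw [mem_filter]
    refine ⟨mem_univ _, idx_eq_of T hm _ a ?_ ?_⟩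
    · rw [Fin.le_def]; simp
    · simp; omega
  · intro p hp
    rw [mem_filter] at hp
    apply Fin.ext
    simp only
    have := f_idx_le T hm p
    rw [Fin.le_def, hp.2] at this
    omega
  · intro t ht
    simp

include T hm in
lemma sum_len : ∑ a : Fin m, len T hm a = N + 1 := by
  have h := Finset.card_eq_sum_card_fiberwise
    (f := idx T hm) (s := (univ : Finset (Fin (N+1)))) (t := (univ : Finset (Fin m)))
    (fun x _ => mem_univ _)
  rw [card_univ, Fintype.card_fin] at h
  rw [h]
  exact Finset.sum_congr rfl fun a _ => (card_block T hm a).symm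

lemma start_value (π : Equiv.Perm (Fin (N+1)))
    (hπ : ∀ i ∈ T, ((π i.succ : Fin (N+1)) : ℕ) = ((π i.castSucc : Fin (N+1)) : ℕ) + 1)
    (a : Fin m) :
    ((π (f T hm a) : Fin (N+1)) : ℕ)
      = ∑ b ∈ univ.filter
          (fun b => ((π (f T hm b) : Fin (N+1)) : ℕ) < ((π (f T hm a) : Fin (N+1)) : ℕ)),
          len T hm b := by
  classical
  set c : ℕ := ((π (f T hm a) : Fin (N+1)) : ℕ) with hc
  have hval : c = (univ.filter (fun v : Fin (N+1) => (v:ℕ) < c)).card := by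
    have heq : univ.filter (fun v : Fin (N+1) => (v:ℕ) < c) = Finset.Iio (π (f T hm a)) := by
      ext v
      rw [mem_filter, Finset.mem_Iio, Fin.lt_def]
      exact ⟨fun h => h.2, fun h => ⟨mem_univ _, h⟩⟩
    rw [heq, Fin.card_Iio]
  have h2 : (univ.filter (fun v : Fin (N+1) => (v:ℕ) < c)).card
      = (univ.filter (fun p : Fin (N+1) => ((π p : Fin (N+1)):ℕ) < c)).card :=
    (Finset.card_equiv π (fun p => by simp)).symm
  have h3 := Finset.card_eq_sum_card_fiberwise (f := idx T hm)
      (s := univ.filter (fun p : Fin (N+1) => ((π p : Fin (N+1)):ℕ) < c))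
      (t := (univ : Finset (Fin m))) (fun x _ => mem_univ _)
  have h4 : ∀ b : Fin m,
      ((univ.filter (fun p : Fin (N+1) => ((π p : Fin (N+1)):ℕ) < c)).filter
        (fun p => idx T hm p = b)).card
      = if ((π (f T hm b) : Fin (N+1)) : ℕ) < c then len T hm b else 0 := by
    intro b
    have hnxt : (f T hm b : ℕ) + len T hm b = nxt T hm b := by
      have h1 := lt_nxt_idx T hm (f T hm b)
      rw [idx_f] at h1
      unfold len
      omega
    by_cases hb : ((π (f T hm b) : Fin (N+1)) : ℕ) < c
    · rw [if_pos hb, ← card_block T hm b]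
      congr 1
      ext p
      simp only [mem_filter, mem_univ, true_and]
      constructor
      · rintro ⟨-, h⟩; exact h
      · intro hpb
        refine ⟨?_, hpb⟩
        by_contra hge
        push_neg at hge
        have hoff := apply_block T hm π hπ p
        rw [hpb] at hoff
        have hofflt : (p:ℕ) - (f T hm b : ℕ) < len T hm b := by
          have := offset_lt_len T hm p
          rwa [hpb] at this
        set t : ℕ := c - ((π (f T hm b) : Fin (N+1)) : ℕ) with ht
        have htoff : t ≤ (p:ℕ) - (f T hm b : ℕ) := by omega
        have hqlt : (f T hm b : ℕ) + t < N + 1 := by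
          have := f_add_len_le T hm b
          omega
        set q : Fin (N+1) := ⟨(f T hm b : ℕ) + t, hqlt⟩ with hq
        have hqval : (q:ℕ) = (f T hm b : ℕ) + t := rfl
        have hidxq : idx T hm q = b := by
          apply idx_eq_of
          · rw [Fin.le_def, hqval]; exact Nat.le_add_right _ _
          · rw [hqval]; omega
        have hπq : ((π q : Fin (N+1)) : ℕ) = c := by
          have h6 := apply_block T hm π hπ q
          rw [hidxq] at h6
          omega
        have : π q = π (f T hm a) := Fin.ext (by rw [hπq, hc])
        have hqa : q = f T hm a := π.injective this
        have : b = a := by rw [← hidxq, hqa, idx_f]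
        rw [this] at hb
        exact absurd hb (lt_irrefl _)
    · rw [if_neg hb]
      rw [Finset.card_eq_zero]
      ext p
      simp only [mem_filter, mem_univ, true_and, notMem_empty, iff_false, not_and]
      intro hpc hpb
      have hoff := apply_block T hm π hπ p
      rw [hpb] at hoff
      omega
  have h5 : c = ∑ b : Fin m,
      if ((π (f T hm b) : Fin (N+1)) : ℕ) < c then len T hm b else 0 :=
    hval.trans (h2.trans (h3.trans (Finset.sum_congr rfl fun b _ => h4 b)))
  exact h5.trans (Finset.sum_filter _ _).symm

/-- value start of block `a`, given the block arrangement `σ` -/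
def vstart (σ : Equiv.Perm (Fin m)) (a : Fin m) : ℕ :=
  ∑ b ∈ univ.filter (fun b => σ b < σ a), len T hm b

lemma vstart_add_len_le (σ : Equiv.Perm (Fin m)) (a : Fin m) :
    vstart T hm σ a + len T hm a ≤ N + 1 := by
  have hna : a ∉ univ.filter (fun b => σ b < σ a) := by simp
  have hs := Finset.sum_le_sum_of_subset (f := len T hm)
    (subset_univ (insert a (univ.filter (fun b => σ b < σ a))))
  rw [Finset.sum_insert hna] at hs
  have hl := sum_len T hm
  unfold vstart
  omega

lemma vstart_mono (σ : Equiv.Perm (Fin m)) {a a' : Fin m} (h : σ a < σ a') :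
    vstart T hm σ a + len T hm a ≤ vstart T hm σ a' := by
  have hna : a ∉ univ.filter (fun b => σ b < σ a) := by simp
  have hsub : insert a (univ.filter (fun b => σ b < σ a))
      ⊆ univ.filter (fun b => σ b < σ a') := by
    intro b hb
    rcases Finset.mem_insert.mp hb with rfl | hb
    · simp [h]
    · rw [mem_filter] at hb ⊢
      exact ⟨hb.1, lt_trans hb.2 h⟩
  have hs := Finset.sum_le_sum_of_subset (f := len T hm) hsub
  rw [Finset.sum_insert hna] at hs
  unfold vstart
  omega

def bwdFun (σ : Equiv.Perm (Fin m)) (p : Fin (N+1)) : Fin (N+1) :=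
  ⟨vstart T hm σ (idx T hm p) + ((p:ℕ) - (f T hm (idx T hm p) : ℕ)), by
    have h1 := offset_lt_len T hm p
    have h2 := vstart_add_len_le T hm σ (idx T hm p)
    omega⟩

lemma bwdFun_inj (σ : Equiv.Perm (Fin m)) : Function.Injective (bwdFun T hm σ) := by
  have key : ∀ p q : Fin (N+1), σ (idx T hm p) < σ (idx T hm q) →
      bwdFun T hm σ p ≠ bwdFun T hm σ q := by
    intro p q hlt heq
    have hv : vstart T hm σ (idx T hm p) + ((p:ℕ) - (f T hm (idx T hm p) : ℕ))
        = vstart T hm σ (idx T hm q) + ((q:ℕ) - (f T hm (idx T hm q) : ℕ)) :=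
      congrArg Fin.val heq
    have h1 := offset_lt_len T hm p
    have h2 := vstart_mono T hm σ hlt
    omega
  intro p q h
  rcases lt_trichotomy (σ (idx T hm p)) (σ (idx T hm q)) with hlt | heq | hgt
  · exact absurd h (key p q hlt)
  · have hidx : idx T hm p = idx T hm q := σ.injective heq
    have hv : vstart T hm σ (idx T hm p) + ((p:ℕ) - (f T hm (idx T hm p) : ℕ))
        = vstart T hm σ (idx T hm q) + ((q:ℕ) - (f T hm (idx T hm q) : ℕ)) :=
      congrArg Fin.val h
    rw [hidx] at hv
    have h3 := f_idx_add_offset T hm p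
    have h4 := f_idx_add_offset T hm q
    rw [hidx] at h3
    apply Fin.ext
    omega
  · exact absurd h.symm (key q p hgt)

noncomputable def bwd (σ : Equiv.Perm (Fin m)) : Equiv.Perm (Fin (N+1)) :=
  Equiv.ofBijective _ (Finite.injective_iff_bijective.mp (bwdFun_inj T hm σ))

lemma bwd_apply (σ : Equiv.Perm (Fin m)) (p : Fin (N+1)) :
    ((bwd T hm σ p : Fin (N+1)) : ℕ)
      = vstart T hm σ (idx T hm p) + ((p:ℕ) - (f T hm (idx T hm p) : ℕ)) := rfl

lemma bwd_constraints (σ : Equiv.Perm (Fin m)) :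
    ∀ i ∈ T, ((bwd T hm σ i.succ : Fin (N+1)) : ℕ)
      = ((bwd T hm σ i.castSucc : Fin (N+1)) : ℕ) + 1 := by
  intro i hi
  obtain ⟨hidx, hle⟩ := idx_succ T hm hi
  rw [bwd_apply, bwd_apply, hidx]
  rw [hidx] at hle
  have h1 : (i.succ : ℕ) = (i.castSucc : ℕ) + 1 := by
    simp [Fin.val_succ, Fin.coe_castSucc]
  omega

def rank (π : Equiv.Perm (Fin (N+1))) (a : Fin m) : ℕ :=
  (univ.filter (fun b => ((π (f T hm b) : Fin (N+1)) : ℕ)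
    < ((π (f T hm a) : Fin (N+1)) : ℕ))).card

lemma rank_lt_m (π : Equiv.Perm (Fin (N+1))) (a : Fin m) : rank T hm π a < m := by
  have hsub : univ.filter (fun b => ((π (f T hm b) : Fin (N+1)) : ℕ)
      < ((π (f T hm a) : Fin (N+1)) : ℕ)) ⊆ univ.erase a := by
    intro b hb
    rw [mem_filter] at hb
    rw [mem_erase]
    refine ⟨?_, mem_univ _⟩
    rintro rfl
    exact absurd hb.2 (lt_irrefl _)
  have := Finset.card_le_card hsub
  rw [Finset.card_erase_of_mem (mem_univ a), card_univ, Fintype.card_fin] at this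
  have := hm1 T hm
  unfold rank
  omega

lemma rank_lt_of (π : Equiv.Perm (Fin (N+1))) {b a : Fin m}
    (h : ((π (f T hm b) : Fin (N+1)) : ℕ) < ((π (f T hm a) : Fin (N+1)) : ℕ)) :
    rank T hm π b < rank T hm π a := by
  apply Finset.card_lt_card
  rw [Finset.ssubset_iff_of_subset]
  · exact ⟨b, mem_filter.mpr ⟨mem_univ _, h⟩,
      fun hx => absurd (mem_filter.mp hx).2 (lt_irrefl _)⟩
  · intro x hx
    rw [mem_filter] at hx ⊢
    exact ⟨hx.1, lt_trans hx.2 h⟩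

lemma rank_lt_rank_iff (π : Equiv.Perm (Fin (N+1))) {b a : Fin m} :
    rank T hm π b < rank T hm π a
      ↔ ((π (f T hm b) : Fin (N+1)) : ℕ) < ((π (f T hm a) : Fin (N+1)) : ℕ) := by
  constructor
  · intro h
    by_contra hc
    push_neg at hc
    rcases eq_or_lt_of_le hc with heq | hlt
    · have : rank T hm π b = rank T hm π a := by
        unfold rank
        rw [heq]
      omega
    · have := rank_lt_of T hm π hlt
      omega
  · exact rank_lt_of T hm π

noncomputable def fwd (π : Equiv.Perm (Fin (N+1))) : Equiv.Perm (Fin m) :=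
  Equiv.ofBijective (fun a => (⟨rank T hm π a, rank_lt_m T hm π a⟩ : Fin m))
    (Finite.injective_iff_bijective.mp (by
      intro a a' h
      have hv : rank T hm π a = rank T hm π a' := congrArg Fin.val h
      have hva : ((π (f T hm a) : Fin (N+1)) : ℕ) = ((π (f T hm a') : Fin (N+1)) : ℕ) := by
        rcases lt_trichotomy ((π (f T hm a) : Fin (N+1)) : ℕ)
            ((π (f T hm a') : Fin (N+1)) : ℕ) with hlt | heq | hgt
        · have := rank_lt_of T hm π hlt; omega
        · exact heq
        · have := rank_lt_of T hm π hgt; omega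
      exact (f T hm).injective (π.injective (Fin.ext hva))))

lemma fwd_apply (π : Equiv.Perm (Fin (N+1))) (a : Fin m) :
    ((fwd T hm π a : Fin m) : ℕ) = rank T hm π a := rfl

lemma fwd_bwd (σ : Equiv.Perm (Fin m)) : fwd T hm (bwd T hm σ) = σ := by
  apply Equiv.ext
  intro a
  apply Fin.ext
  rw [fwd_apply]
  have hb : ∀ b : Fin m, ((bwd T hm σ (f T hm b) : Fin (N+1)) : ℕ) = vstart T hm σ b := by
    intro b
    rw [bwd_apply, idx_f]
    omega
  have hcond : ∀ b : Fin m,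
      (((bwd T hm σ (f T hm b) : Fin (N+1)) : ℕ) < ((bwd T hm σ (f T hm a) : Fin (N+1)) : ℕ))
        ↔ σ b < σ a := by
    intro b
    rw [hb, hb]
    constructor
    · intro h
      by_contra hc
      push_neg at hc
      rcases eq_or_lt_of_le hc with heq | hlt
      · have : b = a := σ.injective heq.symm
        subst this
        exact absurd h (lt_irrefl _)
      · have h1 := vstart_mono T hm σ hlt
        have h2 := len_pos T hm a
        omega
    · intro h
      have h1 := vstart_mono T hm σ h
      have h2 := len_pos T hm b
      omega
  unfold rank
  rw [Finset.filter_congr (fun b _ => by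
    rw [show (((bwd T hm σ) ((f T hm) b) : Fin (N+1)) : ℕ)
          < (((bwd T hm σ) ((f T hm) a) : Fin (N+1)) : ℕ) ↔ σ b < σ a from hcond b])]
  exact rank_perm m σ a

lemma bwd_fwd (π : Equiv.Perm (Fin (N+1)))
    (hπ : ∀ i ∈ T, ((π i.succ : Fin (N+1)) : ℕ) = ((π i.castSucc : Fin (N+1)) : ℕ) + 1) :
    bwd T hm (fwd T hm π) = π := by
  apply Equiv.ext
  intro p
  apply Fin.ext
  rw [bwd_apply]
  have hv : ∀ a : Fin m, vstart T hm (fwd T hm π) a = ((π (f T hm a) : Fin (N+1)) : ℕ) := by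
    intro a
    unfold vstart
    rw [start_value T hm π hπ a]
    apply Finset.sum_congr _ (fun _ _ => rfl)
    apply Finset.filter_congr
    intro b _
    rw [show (fwd T hm π b < fwd T hm π a)
        ↔ rank T hm π b < rank T hm π a from Iff.rfl]
    exact rank_lt_rank_iff T hm π
  rw [hv]
  exact (apply_block T hm π hπ p).symm

end

/-- The key counting lemma: permutations with a prescribed set of successions. -/
theorem card_constrained {N : ℕ} (T : Finset (Fin N)) :
    (univ.filter (fun π : Equiv.Perm (Fin (N+1)) =>
      ∀ i ∈ T, ((π i.succ : Fin (N+1)) : ℕ) = ((π i.castSucc : Fin (N+1)) : ℕ) + 1)).card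
      = (N + 1 - T.card).factorial := by
  have hm : (S T).card = N + 1 - T.card := card_S T
  have h1 : ((univ : Finset (Equiv.Perm (Fin (N + 1 - T.card))))).card
      = (N + 1 - T.card).factorial := by
    rw [card_univ, Fintype.card_perm, Fintype.card_fin]
  rw [← h1]
  apply Finset.card_bij' (fun π _ => fwd T hm π) (fun σ _ => bwd T hm σ)
  · intro π _
    exact mem_univ _
  · intro σ _
    rw [mem_filter]
    exact ⟨mem_univ _, bwd_constraints T hm σ⟩
  · intro π hπ
    rw [mem_filter] at hπ
    exact bwd_fwd T hm π hπ.2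
  · intro σ _
    exact fwd_bwd T hm σ

end RelDer

/-- For n ≥ 1, the number of relative derangements on [n] (permutations π
    with π_{i+1} ≠ π_i + 1) equals Σ_{k=0}^{n-1} (-1)^k · C(n-1,k) · (n-k)!. -/
theorem relative_derangement_formula (n : ℕ) (hn : 1 ≤ n) :
    (Fintype.card {π : Equiv.Perm (Fin n) //
        ∀ i j : Fin n, j.val = i.val + 1 → (π j).val ≠ (π i).val + 1} : ℤ) =
      ∑ k ∈ Finset.range n,
        (-1 : ℤ) ^ k * (Nat.choose (n - 1) k : ℤ) * (Nat.factorial (n - k) : ℤ) := by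
  classical
  obtain ⟨N, rfl⟩ : ∃ N, n = N + 1 := ⟨n - 1, (Nat.succ_pred_eq_of_pos hn).symm⟩
  set F : Equiv.Perm (Fin (N+1)) → Finset (Fin N) := fun π =>
    univ.filter (fun i => ((π i.succ : Fin (N+1)) : ℕ) = ((π i.castSucc : Fin (N+1)) : ℕ) + 1)
    with hF
  have hiff : ∀ π : Equiv.Perm (Fin (N+1)),
      (∀ i j : Fin (N+1), j.val = i.val + 1 → (π j).val ≠ (π i).val + 1) ↔ F π = ∅ := by
    intro π
    constructor
    · intro h
      rw [Finset.eq_empty_iff_forall_notMem]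
      intro i hi
      simp only [hF, mem_filter, mem_univ, true_and] at hi
      exact h i.castSucc i.succ (by simp [Fin.val_succ, Fin.coe_castSucc]) hi
    · intro h i j hij hc
      have hilt : (i : ℕ) < N := by have := j.isLt; omega
      have hmem : (⟨(i:ℕ), hilt⟩ : Fin N) ∈ F π := by
        simp only [hF, mem_filter, mem_univ, true_and]
        have h1 : (⟨(i:ℕ), hilt⟩ : Fin N).succ = j := Fin.ext (by simp [Fin.val_succ, hij])
        have h2 : (⟨(i:ℕ), hilt⟩ : Fin N).castSucc = i := Fin.ext (by simp)
        rw [h1, h2]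
        exact hc
      rw [h] at hmem
      exact absurd hmem (notMem_empty _)
  have hsub : Fintype.card {π : Equiv.Perm (Fin (N+1)) //
      ∀ i j : Fin (N+1), j.val = i.val + 1 → (π j).val ≠ (π i).val + 1}
      = (univ.filter (fun π : Equiv.Perm (Fin (N+1)) => F π = ∅)).card := by
    rw [Fintype.card_subtype]
    congr 1
    apply Finset.filter_congr
    intro π _
    exact hiff π
  rw [hsub]
  have step1 : ((univ.filter (fun π : Equiv.Perm (Fin (N+1)) => F π = ∅)).card : ℤ)
      = ∑ π : Equiv.Perm (Fin (N+1)), ∑ T ∈ (F π).powerset, (-1:ℤ)^T.card := by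
    rw [Finset.card_filter]
    push_cast
    exact Finset.sum_congr rfl fun π _ => (Finset.sum_powerset_neg_one_pow_card).symm
  have step2 : ∀ π : Equiv.Perm (Fin (N+1)), ∑ T ∈ (F π).powerset, (-1:ℤ)^T.card
      = ∑ T ∈ (univ : Finset (Fin N)).powerset,
          if T ⊆ F π then (-1:ℤ)^T.card else 0 := by
    intro π
    rw [← Finset.sum_filter]
    apply Finset.sum_congr _ (fun _ _ => rfl)
    ext T
    simp only [Finset.mem_powerset, Finset.mem_filter]
    exact ⟨fun h => ⟨subset_univ T, h⟩, fun h => h.2⟩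
  have step3 : (∑ π : Equiv.Perm (Fin (N+1)), ∑ T ∈ (univ : Finset (Fin N)).powerset,
        if T ⊆ F π then (-1:ℤ)^T.card else 0)
      = ∑ T ∈ (univ : Finset (Fin N)).powerset,
          (-1:ℤ)^T.card * ((N + 1 - T.card).factorial : ℤ) := by
    rw [Finset.sum_comm]
    apply Finset.sum_congr rfl
    intro T _
    have hfilt : univ.filter (fun π : Equiv.Perm (Fin (N+1)) => T ⊆ F π)
        = univ.filter (fun π : Equiv.Perm (Fin (N+1)) =>
            ∀ i ∈ T, ((π i.succ : Fin (N+1)) : ℕ) = ((π i.castSucc : Fin (N+1)) : ℕ) + 1) := by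
      apply Finset.filter_congr
      intro π _
      constructor
      · intro hs i hi
        have := hs hi
        simp only [hF, mem_filter, mem_univ, true_and] at this
        exact this
      · intro h i hi
        simp only [hF, mem_filter, mem_univ, true_and]
        exact h i hi
    calc (∑ π : Equiv.Perm (Fin (N+1)), if T ⊆ F π then (-1:ℤ)^T.card else 0)
        = ∑ _π ∈ univ.filter (fun π : Equiv.Perm (Fin (N+1)) => T ⊆ F π), (-1:ℤ)^T.card :=
          (Finset.sum_filter _ _).symm
      _ = ((univ.filter (fun π : Equiv.Perm (Fin (N+1)) => T ⊆ F π)).card : ℤ) * (-1:ℤ)^T.card := by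
          rw [Finset.sum_const, nsmul_eq_mul]
      _ = ((N + 1 - T.card).factorial : ℤ) * (-1:ℤ)^T.card := by
          rw [hfilt, RelDer.card_constrained T]
      _ = (-1:ℤ)^T.card * ((N + 1 - T.card).factorial : ℤ) := mul_comm _ _
  have step4 : (∑ T ∈ (univ : Finset (Fin N)).powerset,
        (-1:ℤ)^T.card * ((N + 1 - T.card).factorial : ℤ))
      = ∑ k ∈ Finset.range (N+1),
          (-1 : ℤ) ^ k * (Nat.choose N k : ℤ) * (Nat.factorial (N + 1 - k) : ℤ) := by
    rw [Finset.sum_powerset, card_univ, Fintype.card_fin]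
    apply Finset.sum_congr rfl
    intro j hj
    rw [Finset.sum_congr rfl (fun T hT => by
      rw [(Finset.mem_powersetCard.mp hT).2])]
    rw [Finset.sum_const, Finset.card_powersetCard, card_univ, Fintype.card_fin, nsmul_eq_mul]
    ring
  rw [step1, Finset.sum_congr rfl (fun π _ => step2 π), step3, step4]
  simp [Nat.add_sub_cancel]
end
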